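/- arXiv:math/0105235 — 5 statements merged into one kernel-verified Lean document; each statement's English description precedes it below -/
import Mathlib

section
/- Let n ≥ 2 and let a₁, …, aₙ be real numbers with a₁ = 1 and 0 ≤ aᵢ < 1 for 2 ≤ i ≤ n. Define the n×n real matrix T by Tᵢᵢ = aᵢ and Tᵢⱼ = (1 − aᵢ)/(n − 1) for i ≠ j, and set B = ((n−1)/n)·(I − T). Let p(x) = ∏_{i=1}^n (x − (1 − aᵢ)). Then the characteristic polynomial of B satisfies det(x·I − B) = (x/n)·p′(x). -/
open Polynomial Matrix

lemma det_diag_add_const {K : Type*} [Field K] {n : ℕ} (d u : Fin n → K)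
    (hd : ∀ i, d i ≠ 0) :
    (Matrix.of (fun i j => (if i = j then d i else 0) + u i)).det
      = (∏ i, d i) * (1 + ∑ i, u i / d i) := by
  have h : (Matrix.of (fun i j => (if i = j then d i else 0) + u i))
      = Matrix.diagonal d *
        (1 + Matrix.replicateCol Unit (fun i => u i / d i) * Matrix.replicateRow Unit (fun _ => (1 : K))) := by
    ext i j
    rw [Matrix.diagonal_mul]
    by_cases hij : i = j
    · subst hij
      simp [Matrix.one_apply, Matrix.mul_apply, mul_add, mul_div_cancel₀ _ (hd i)]
    · simp [hij, Matrix.one_apply, Matrix.mul_apply, mul_div_cancel₀ _ (hd i)]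
  rw [h, Matrix.det_mul, Matrix.det_diagonal, Matrix.det_one_add_replicateCol_mul_replicateRow]
  simp [dotProduct]

lemma derivative_finset_prod {ι : Type*} [DecidableEq ι] (s : Finset ι) (f : ι → Polynomial ℝ) :
    derivative (∏ i ∈ s, f i) = ∑ i ∈ s, (∏ j ∈ s.erase i, f j) * derivative (f i) := by
  induction s using Finset.induction_on with
  | empty => simp
  | @insert a s ha ih =>
    rw [Finset.prod_insert ha, derivative_mul, ih, Finset.sum_insert ha, Finset.erase_insert ha,
      Finset.mul_sum]
    congr 1
    · ring
    · refine Finset.sum_congr rfl fun i hi => ?_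
      have hai : a ≠ i := fun h => ha (h ▸ hi)
      rw [Finset.erase_insert_of_ne hai, Finset.prod_insert
        (fun h => ha (Finset.mem_of_mem_erase h))]
      ring

/-- **Lemma (charpoly of the learning matrix).**
Let `n ≥ 2`, `a 0 = 1`, `0 ≤ a i < 1` for `i ≠ 0`.  Define the `n × n` matrix `T` by
`T i i = a i` and `T i j = (1 - a i)/(n - 1)` for `i ≠ j`, and set
`B = ((n-1)/n) • (I - T)`.  With `p x = ∏ i (x - (1 - a i))`, the characteristic
polynomial of `B` equals `(x/n) * p'(x)`. -/
theorem charpoly_of_learning_matrix (n : ℕ) (hn : 2 ≤ n) (a : Fin n → ℝ)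
    (ha1 : a ⟨0, by omega⟩ = 1)
    (ha : ∀ i : Fin n, i ≠ ⟨0, by omega⟩ → 0 ≤ a i ∧ a i < 1)
    (T : Matrix (Fin n) (Fin n) ℝ)
    (hT : ∀ i j : Fin n, T i j = if i = j then a i else (1 - a i) / (n - 1))
    (B : Matrix (Fin n) (Fin n) ℝ)
    (hB : B = (((n : ℝ) - 1) / n) • ((1 : Matrix (Fin n) (Fin n) ℝ) - T))
    (p : Polynomial ℝ)
    (hp : p = ∏ i : Fin n, (X - C (1 - a i))) :
    B.charpoly = C (1 / (n : ℝ)) * X * derivative p := by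
  set b : Fin n → ℝ := fun i => 1 - a i with hb
  have hn0 : (n : ℝ) ≠ 0 := by positivity
  have hn1 : (n : ℝ) - 1 ≠ 0 := by
    have : (2 : ℝ) ≤ n := by exact_mod_cast hn
    linarith
  have hB' : ∀ i j : Fin n, B i j = if i = j then ((n:ℝ)-1)/n * b i else -(b i / n) := by
    intro i j
    rw [hB]
    by_cases hij : i = j
    · simp [hij, hT, hb, Matrix.one_apply]
    · simp only [Matrix.smul_apply, Matrix.sub_apply, Matrix.one_apply_ne hij, hT, if_neg hij,
        smul_eq_mul, hb]
      field_simp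
      ring
  -- derivative of p
  have hderiv : derivative p = ∑ i : Fin n, ∏ j ∈ Finset.univ.erase i, (X - C (b j)) := by
    rw [hp, derivative_finset_prod]
    refine Finset.sum_congr rfl fun i _ => ?_
    simp [hb]
  -- key evaluation identity
  have key : ∀ x : ℝ, (∀ i, x ≠ b i) →
      eval x B.charpoly = eval x (C (1 / (n : ℝ)) * X * derivative p) := by
    intro x hx
    have hd : ∀ i, x - b i ≠ 0 := fun i => sub_ne_zero.mpr (hx i)
    -- LHS as a determinant over ℝ
    have hL : eval x B.charpoly
        = (Matrix.of (fun i j : Fin n => (if i = j then x - b i else 0) + b i / n)).det := by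
      rw [Matrix.charpoly]
      have := (RingHom.map_det (evalRingHom x) (charmatrix B)).symm
      simp only [coe_evalRingHom] at this
      rw [show eval x (charmatrix B).det = ((charmatrix B).map (eval x)).det from
        (RingHom.map_det (evalRingHom x) (charmatrix B))]
      congr 1
      ext i j
      by_cases hij : i = j
      · subst hij
        simp only [Matrix.map_apply, charmatrix_apply_eq, Matrix.of_apply, if_pos rfl,
          eval_sub, eval_X, eval_C, hB' i i, if_pos rfl, ↓reduceIte]
        field_simp
        ring
      · simp [Matrix.map_apply, charmatrix_apply_ne _ _ _ hij, hB' i j, if_neg hij]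
    rw [hL, det_diag_add_const _ _ hd]
    -- RHS evaluation
    rw [hderiv]
    simp only [eval_mul, eval_C, eval_X, eval_finset_sum, eval_prod, eval_sub]
    have hprod : ∀ i : Fin n, (x - b i) * ∏ j ∈ Finset.univ.erase i, (x - b j)
        = ∏ j, (x - b j) :=
      fun i => Finset.mul_prod_erase Finset.univ (fun j => x - b j) (Finset.mem_univ i)
    have expand : ∀ i : Fin n, x * ∏ j ∈ Finset.univ.erase i, (x - b j)
        = ∏ j, (x - b j) + b i * ∏ j ∈ Finset.univ.erase i, (x - b j) := by
      intro i
      rw [← hprod i]; ring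
    -- rewrite RHS sum
    have hR : (1 / (n:ℝ)) * x * ∑ i : Fin n, ∏ j ∈ Finset.univ.erase i, (x - b j)
        = (∏ j, (x - b j)) + (1/(n:ℝ)) * ∑ i : Fin n,
            b i * ∏ j ∈ Finset.univ.erase i, (x - b j) := by
      rw [mul_assoc, Finset.mul_sum]
      conv_lhs => rw [show (∑ i : Fin n, x * ∏ j ∈ Finset.univ.erase i, (x - b j))
        = ∑ i : Fin n, ((∏ j, (x - b j)) + b i * ∏ j ∈ Finset.univ.erase i, (x - b j))
        from Finset.sum_congr rfl fun i _ => expand i]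
      rw [Finset.sum_add_distrib, Finset.sum_const, Finset.card_univ, Fintype.card_fin,
        mul_add, nsmul_eq_mul]
      rw [← mul_assoc]
      rw [one_div, inv_mul_cancel₀ hn0, one_mul, Finset.mul_sum]
    rw [hR, mul_add, mul_one, Finset.mul_sum, Finset.mul_sum]
    congr 1
    refine Finset.sum_congr rfl fun i _ => ?_
    rw [← hprod i, mul_comm (x - b i) (∏ j ∈ Finset.univ.erase i, (x - b j)), mul_assoc,
      mul_comm (x - b i) (b i / ↑n / (x - b i)), div_mul_cancel₀ _ (hd i)]
    ring
  -- conclude polynomial equality from infinitely many agreement points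
  have hq : B.charpoly - C (1 / (n : ℝ)) * X * derivative p = 0 := by
    apply Polynomial.eq_zero_of_infinite_isRoot
    apply Set.Infinite.mono (s := (Set.range b)ᶜ)
    · intro x hx
      have hx' : ∀ i, x ≠ b i := by
        intro i hxi
        exact hx ⟨i, hxi.symm⟩
      simp only [Set.mem_setOf_eq, IsRoot.def, eval_sub, key x hx', sub_self]
    · exact Set.Finite.infinite_compl (Set.finite_range b)
  linear_combination (norm := ring_nf) hq
end

section
/- Suppose the density f satisfies f(x) = c + O(x^δ) as x → 0⁺ for some constants c, δ > 0, and suppose that the random variables Yₙ = Xₙ − c·log n converge in distribution to a random variable 𝒴. Set 𝔠₁ = 1/c. Then the random variables log n · (Hₙ·log n − 𝔠₁) converge in distribution to −𝔠₁²·𝒴; equivalently, their limiting distribution function is x ↦ 1 − G(−x/𝔠₁²), where G is the distribution function of 𝒴. -/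
open MeasureTheory ProbabilityTheory Filter

lemma harmonic_aux_iff (L t c C₁ X : ℝ) (hc : 0 < c) (hC₁ : C₁ = 1/c)
    (hD : 0 < L + t*c) (hX : 0 < X) :
    L * (X⁻¹ * L - C₁) ≤ t ↔ -t*c^2*L/(L+t*c) ≤ X - c*L := by
  have hX' : X ≠ 0 := hX.ne'
  have hc' : c ≠ 0 := hc.ne'
  have h3 : L * (X⁻¹*L - C₁) * (X*c) = c*L^2 - L*X := by
    rw [hC₁]; field_simp
  constructor
  · intro h
    rw [div_le_iff₀ hD]
    have h2 := mul_le_mul_of_nonneg_right h (le_of_lt (show (0:ℝ) < X*c by positivity))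
    rw [h3] at h2
    nlinarith
  · intro h
    rw [div_le_iff₀ hD] at h
    have h2 : L * (X⁻¹*L - C₁) * (X*c) ≤ t*(X*c) := by rw [h3]; nlinarith
    exact le_of_mul_le_mul_right h2 (by positivity)

/-- **Theorem (limit law for the harmonic mean, case `β = 0`).**
Suppose `f(t) = c + O(t^δ)` as `t → 0⁺`, and suppose `Yₙ = Xₙ - c log n` converges in
distribution to a random variable `𝒴` with distribution function `G` (convergence in
distribution is expressed by convergence of the distribution functions at all continuity
points of `G`).  Set `𝔠₁ = 1/c`.  Then `log n · (Hₙ log n - 𝔠₁)` converges in distribution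
to `-𝔠₁² 𝒴`, i.e. its limiting distribution function is `t ↦ 1 - G(-t/𝔠₁²)`. -/
theorem harmonic_mean_limit_law_beta_zero
    {Ω : Type*} [MeasurableSpace Ω] (P : Measure Ω) [IsProbabilityMeasure P]
    (x : ℕ → Ω → ℝ) (hmeas : ∀ i, Measurable (x i))
    (hindep : iIndepFun x P)
    (hval : ∀ i ω, x i ω ∈ Set.Ioc (0 : ℝ) 1)
    (f : ℝ → ℝ)
    (hpdf : ∀ i, Measure.map (x i) P = volume.withDensity (fun t => ENNReal.ofReal (f t)))
    (c δ : ℝ) (hc : 0 < c) (hδ : 0 < δ)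
    (hf : (fun t => f t - c) =O[nhdsWithin 0 (Set.Ioi 0)] (fun t => t ^ δ))
    (Xn : ℕ → Ω → ℝ)
    (hXn : ∀ n ω, Xn n ω = (1 / (n : ℝ)) * ∑ i ∈ Finset.range n, (x i ω)⁻¹)
    (Hn : ℕ → Ω → ℝ) (hHn : ∀ n ω, Hn n ω = (Xn n ω)⁻¹)
    -- `𝒴` is a random variable with distribution function `G`
    {Ω' : Type*} [MeasurableSpace Ω'] (P' : Measure Ω') [IsProbabilityMeasure P']
    (Y : Ω' → ℝ) (hY : Measurable Y) (G : ℝ → ℝ)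
    (hG : ∀ t, G t = cdf (P'.map Y) t)
    -- `Yₙ = Xₙ - c log n` converges in distribution to `𝒴`
    (hconv : ∀ t : ℝ, ContinuousAt G t →
      Tendsto (fun n => (P {ω | Xn n ω - c * Real.log n ≤ t}).toReal) atTop (nhds (G t)))
    (C₁ : ℝ) (hC₁ : C₁ = 1 / c) :
    ∀ t : ℝ, ContinuousAt (fun s => 1 - G (-s / C₁ ^ 2)) t →
      Tendsto (fun (n : ℕ) => (P {ω | Real.log n * (Hn n ω * Real.log n - C₁) ≤ t}).toReal)
        atTop (nhds (1 - G (-t / C₁ ^ 2))) := by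
  intro t hcont
  have hc' : c ≠ 0 := hc.ne'
  have hC₁pos : 0 < C₁ := by rw [hC₁]; positivity
  have hC₁' : C₁ ≠ 0 := hC₁pos.ne'
  set a : ℝ := -t / C₁ ^ 2 with ha_def
  have ha : a = -t * c ^ 2 := by rw [ha_def, hC₁]; field_simp
  -- continuity of `G` at `a`
  have hGa : ContinuousAt G a := by
    have hinner : ContinuousAt (fun u : ℝ => -(C₁^2 * u)) a := by fun_prop
    have hval' : -(C₁^2 * a) = t := by rw [ha_def]; field_simp
    have h1 : ContinuousAt ((fun s => 1 - G (-s / C₁ ^ 2)) ∘ (fun u : ℝ => -(C₁^2*u))) a := by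
      apply ContinuousAt.comp _ hinner
      rw [hval']; exact hcont
    have h2 : ((fun s => 1 - G (-s / C₁ ^ 2)) ∘ (fun u : ℝ => -(C₁^2*u))) = fun u => 1 - G u := by
      funext u
      simp only [Function.comp_apply]
      congr 1
      field_simp
    rw [h2] at h1
    have h3 : ContinuousAt (fun u => 1 - (1 - G u)) a := continuousAt_const.sub h1
    simpa using h3
  -- monotonicity of `G`
  have hGmono : Monotone G := by
    have hGeq : G = cdf (P'.map Y) := funext hG
    rw [hGeq]; exact monotone_cdf _
  -- measurability and positivity of `Xn`
  have hXnmeas : ∀ n, Measurable (Xn n) := by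
    intro n
    have hfe : Xn n = fun ω => (1 / (n : ℝ)) * ∑ i ∈ Finset.range n, (x i ω)⁻¹ :=
      funext (hXn n)
    rw [hfe]
    exact (Finset.measurable_sum _ (fun i _ => (hmeas i).inv)).const_mul _
  have hXpos : ∀ n : ℕ, 1 ≤ n → ∀ ω, 0 < Xn n ω := by
    intro n hn ω
    rw [hXn]
    have hn' : (0:ℝ) < n := by exact_mod_cast hn
    refine mul_pos (by positivity) ?_
    exact Finset.sum_pos (fun i _ => inv_pos.2 (hval i ω).1) ⟨0, Finset.mem_range.2 hn⟩
  -- the auxiliary sequence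
  set A : ℕ → ℝ := fun n => -t*c^2*Real.log n/(Real.log n + t*c) with hA_def
  have hlog : Tendsto (fun n : ℕ => Real.log n) atTop atTop :=
    Real.tendsto_log_atTop.comp tendsto_natCast_atTop_atTop
  have hDlim : Tendsto (fun n : ℕ => Real.log n + t*c) atTop atTop :=
    tendsto_atTop_add_const_right _ _ hlog
  have hev2 : ∀ᶠ n : ℕ in atTop, 0 < Real.log n + t*c := hDlim.eventually_gt_atTop 0
  have hA : Tendsto A atTop (nhds a) := by
    have h0 : Tendsto (fun n : ℕ => t*c/(Real.log n + t*c)) atTop (nhds 0) :=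
      Tendsto.div_atTop tendsto_const_nhds hDlim
    have h1 : Tendsto (fun n : ℕ => -t*c^2*(1 - t*c/(Real.log n + t*c))) atTop
        (nhds (-t*c^2*(1 - 0))) :=
      tendsto_const_nhds.mul (tendsto_const_nhds.sub h0)
    have heq : ∀ᶠ n : ℕ in atTop,
        -t*c^2*(1 - t*c/(Real.log n + t*c)) = A n := by
      filter_upwards [hev2] with n hD
      have hD' : Real.log n + t*c ≠ 0 := hD.ne'
      rw [hA_def]
      field_simp
      ring
    have hval2 : -t*c^2*(1 - 0) = a := by rw [ha]; ring
    rw [← hval2]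
    exact Tendsto.congr' heq h1
  -- the sandwich argument
  have key : Tendsto (fun n : ℕ => (P {ω | Xn n ω - c*Real.log n < A n}).toReal) atTop
      (nhds (G a)) := by
    rw [Metric.tendsto_nhds]
    intro ε hε
    obtain ⟨η, hη, hηball⟩ := Metric.continuousAt_iff.mp hGa (ε/2) (by linarith)
    have hdense : Dense {s : ℝ | ¬ContinuousAt G s}ᶜ :=
      (hGmono.countable_not_continuousAt).dense_compl ℝ
    obtain ⟨u, hucont, hu⟩ := hdense.exists_mem_open isOpen_Ioo
      (Set.nonempty_Ioo.2 (by linarith : a - η < a))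
    obtain ⟨v, hvcont, hv⟩ := hdense.exists_mem_open isOpen_Ioo
      (Set.nonempty_Ioo.2 (by linarith : a < a + η))
    have hu1 : ContinuousAt G u := not_not.mp hucont
    have hv1 : ContinuousAt G v := not_not.mp hvcont
    have h_u : ∀ᶠ n : ℕ in atTop,
        G u - ε/2 < (P {ω | Xn n ω - c*Real.log n ≤ u}).toReal :=
      (hconv u hu1).eventually (eventually_gt_nhds (by linarith))
    have h_v : ∀ᶠ n : ℕ in atTop,
        (P {ω | Xn n ω - c*Real.log n ≤ v}).toReal < G v + ε/2 :=
      (hconv v hv1).eventually (eventually_lt_nhds (by linarith))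
    have h_Au : ∀ᶠ n : ℕ in atTop, u < A n := hA.eventually (eventually_gt_nhds hu.2)
    have h_Av : ∀ᶠ n : ℕ in atTop, A n < v := hA.eventually (eventually_lt_nhds hv.1)
    filter_upwards [h_u, h_v, h_Au, h_Av] with n h1 h2 h3 h4
    have m1 : (P {ω | Xn n ω - c*Real.log n ≤ u}).toReal
        ≤ (P {ω | Xn n ω - c*Real.log n < A n}).toReal :=
      ENNReal.toReal_mono (measure_ne_top _ _)
        (measure_mono (fun ω hω => lt_of_le_of_lt hω h3))
    have m2 : (P {ω | Xn n ω - c*Real.log n < A n}).toReal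
        ≤ (P {ω | Xn n ω - c*Real.log n ≤ v}).toReal :=
      ENNReal.toReal_mono (measure_ne_top _ _)
        (measure_mono (fun ω hω => le_of_lt (lt_trans hω h4)))
    have du : dist (G u) (G a) < ε/2 := hηball (by
      rw [Real.dist_eq, abs_lt]; exact ⟨by linarith [hu.1], by linarith [hu.2]⟩)
    have dv : dist (G v) (G a) < ε/2 := hηball (by
      rw [Real.dist_eq, abs_lt]; exact ⟨by linarith [hv.1], by linarith [hv.2]⟩)
    rw [Real.dist_eq, abs_lt] at du dv ⊢
    constructor <;> linarith
  -- identify the two events for large `n`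
  have hfin : ∀ᶠ n : ℕ in atTop,
      1 - (P {ω | Xn n ω - c*Real.log n < A n}).toReal
      = (P {ω | Real.log n * (Hn n ω * Real.log n - C₁) ≤ t}).toReal := by
    filter_upwards [hev2, eventually_ge_atTop 1] with n hD hn
    have hset : {ω | Real.log n * (Hn n ω * Real.log n - C₁) ≤ t}
        = {ω | Xn n ω - c*Real.log n < A n}ᶜ := by
      ext ω
      simp only [Set.mem_setOf_eq, Set.mem_compl_iff, not_lt]
      rw [hHn]
      exact harmonic_aux_iff (Real.log n) t c C₁ (Xn n ω) hc hC₁ hD (hXpos n hn ω)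
    rw [hset]
    have hms : MeasurableSet {ω | Xn n ω - c*Real.log n < A n} :=
      measurableSet_lt ((hXnmeas n).sub measurable_const) measurable_const
    rw [prob_compl_eq_one_sub hms,
      ENNReal.toReal_sub_of_le prob_le_one (by simp), ENNReal.toReal_one]
  have hfinal : Tendsto
      (fun n : ℕ => 1 - (P {ω | Xn n ω - c*Real.log n < A n}).toReal) atTop
      (nhds (1 - G a)) := tendsto_const_nhds.sub key
  exact Tendsto.congr' hfin hfinal
end

section
/- Let n ≥ 2 and let a₂, …, aₙ be real numbers with 0 ≤ aᵢ < 1. Then the expected learning time of the learner with full memory satisfies T = (1/n)·∑_{k=1}^{n−1} [1/C(n−1,k)]·∑_{S} ∑_{i∈S} 1/(1−aᵢ) = (1/2)·∑_{i=2}^n 1/(1−aᵢ) = (n−1)/(2·H_{n−1}), where the middle summation is over all k-element subsets S of {2, …, n}, C(n−1,k) is the binomial coefficient, and H_{n−1} = (n−1)/(∑_{i=2}^n 1/(1−aᵢ)) is the harmonic mean of the numbers 1−a₂, …, 1−aₙ. -/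
open Finset

lemma count_mem_powersetCard (D : Finset ℕ) (k : ℕ) (i : ℕ) (hi : i ∈ D) (hk : 1 ≤ k) :
    ((D.powersetCard k).filter (fun S => i ∈ S)).card = (D.card - 1).choose (k - 1) := by
  have : (#D - 1).choose (k-1) = #((D.erase i).powersetCard (k-1)) := by
    rw [card_powersetCard, card_erase_of_mem hi]
  rw [this]
  apply card_bij (fun S _ => S.erase i)
  · intro S hS
    simp only [mem_filter, mem_powersetCard] at hS
    simp only [mem_powersetCard]
    refine ⟨erase_subset_erase _ hS.1.1, ?_⟩
    rw [card_erase_of_mem hS.2, hS.1.2]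
  · intro S hS T hT h
    simp only [mem_filter] at hS hT
    rw [← insert_erase hS.2, ← insert_erase hT.2, h]
  · intro S hS
    simp only [mem_powersetCard] at hS
    refine ⟨insert i S, ?_, ?_⟩
    · simp only [mem_filter, mem_powersetCard, mem_insert]
      have hiS : i ∉ S := fun h => (notMem_erase i D) (hS.1 h)
      refine ⟨⟨insert_subset hi (hS.1.trans (erase_subset _ _)), ?_⟩, Or.inl trivial⟩
      rw [card_insert_of_notMem hiS, hS.2]
      omega
    · have hiS : i ∉ S := fun h => (notMem_erase i D) (hS.1 h)
      rw [erase_insert hiS]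

lemma sum_powersetCard_sum (D : Finset ℕ) (f : ℕ → ℝ) (k : ℕ) (hk : 1 ≤ k) :
    ∑ S ∈ D.powersetCard k, ∑ i ∈ S, f i
      = ((D.card - 1).choose (k - 1) : ℝ) * ∑ i ∈ D, f i := by
  calc ∑ S ∈ D.powersetCard k, ∑ i ∈ S, f i
      = ∑ S ∈ D.powersetCard k, ∑ i ∈ D, if i ∈ S then f i else 0 := by
        refine Finset.sum_congr rfl fun S hS => ?_
        rw [← Finset.sum_filter]
        congr 1
        rw [Finset.filter_mem_eq_inter]
        exact (Finset.inter_eq_right.2 (mem_powersetCard.1 hS).1).symm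
    _ = ∑ i ∈ D, ∑ S ∈ D.powersetCard k, if i ∈ S then f i else 0 := Finset.sum_comm
    _ = ∑ i ∈ D, ((D.card - 1).choose (k - 1) : ℝ) * f i := by
        refine Finset.sum_congr rfl fun i hi => ?_
        rw [← Finset.sum_filter, Finset.sum_const, nsmul_eq_mul,
          count_mem_powersetCard D k i hi hk]
    _ = _ := by rw [← Finset.mul_sum]

/-- **Expected learning time of the learner with full memory.**
For `n ≥ 2` and overlaps `0 ≤ aᵢ < 1` (`2 ≤ i ≤ n`), the expected learning time
`T = (1/n) ∑_{k=1}^{n-1} (1/C(n-1,k)) ∑_{S ⊆ {2,…,n}, |S| = k} ∑_{i ∈ S} 1/(1-aᵢ)`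
equals `(1/2) ∑_{i=2}^n 1/(1-aᵢ) = (n-1)/(2 H_{n-1})`, where
`H_{n-1} = (n-1)/∑_{i=2}^n 1/(1-aᵢ)` is the harmonic mean of the `1-aᵢ`. -/
theorem full_memory_expected_learning_time (n : ℕ) (hn : 2 ≤ n) (a : ℕ → ℝ)
    (ha : ∀ i ∈ Finset.Icc 2 n, 0 ≤ a i ∧ a i < 1)
    (T : ℝ)
    (hT : T = (1 / (n : ℝ)) * ∑ k ∈ Finset.Icc 1 (n - 1),
      (1 / ((n - 1).choose k : ℝ)) *
        ∑ S ∈ (Finset.Icc 2 n).powersetCard k, ∑ i ∈ S, 1 / (1 - a i))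
    (H : ℝ) (hH : H = ((n : ℝ) - 1) / ∑ i ∈ Finset.Icc 2 n, 1 / (1 - a i)) :
    T = (1 / 2) * ∑ i ∈ Finset.Icc 2 n, 1 / (1 - a i) ∧
    T = ((n : ℝ) - 1) / (2 * H) := by
  set Ssum : ℝ := ∑ i ∈ Finset.Icc 2 n, 1 / (1 - a i) with hSs
  have hSpos : 0 < Ssum := by
    apply Finset.sum_pos
    · intro i hi
      have h := (ha i hi).2
      have h1 : 0 < 1 - a i := by linarith
      positivity
    · exact ⟨2, by simp [Finset.mem_Icc]; omega⟩
  have hn0 : (n : ℝ) ≠ 0 := by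
    have : 0 < n := by omega
    exact_mod_cast this.ne'
  have hn1 : ((n : ℝ) - 1) ≠ 0 := by
    have : (2 : ℝ) ≤ (n : ℝ) := by exact_mod_cast hn
    linarith
  have hcard : (Finset.Icc 2 n).card = n - 1 := by rw [Nat.card_Icc]; omega
  have key : ∀ k ∈ Finset.Icc 1 (n-1),
      (1 / ((n - 1).choose k : ℝ)) *
        ∑ S ∈ (Finset.Icc 2 n).powersetCard k, ∑ i ∈ S, 1 / (1 - a i)
      = (k : ℝ) * (Ssum / ((n : ℝ) - 1)) := by
    intro k hk
    rw [Finset.mem_Icc] at hk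
    rw [sum_powersetCard_sum _ _ k hk.1, hcard, ← hSs]
    have hCpos : 0 < (n-1).choose k := Nat.choose_pos hk.2
    have hC : ((n-1).choose k : ℝ) ≠ 0 := by positivity
    have hnat : (n-1) * (n-1-1).choose (k-1) = (n-1).choose k * k := by
      obtain ⟨m, rfl⟩ : ∃ m, n = m + 2 := ⟨n - 2, by omega⟩
      obtain ⟨j, rfl⟩ : ∃ j, k = j + 1 := ⟨k - 1, by omega⟩
      simpa using Nat.add_one_mul_choose_eq m j
    have hcast : ((n-1:ℕ) : ℝ) = (n : ℝ) - 1 := by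
      have : 1 ≤ n := by omega
      push_cast [this]; ring
    have hnatR : ((n : ℝ) - 1) * ((n-1-1).choose (k-1) : ℝ) = ((n-1).choose k : ℝ) * (k : ℝ) := by
      rw [← hcast]; exact_mod_cast congrArg (Nat.cast (R := ℝ)) hnat
    field_simp
    nlinarith [hnatR]
  rw [Finset.sum_congr rfl key] at hT
  have hgauss : ∑ k ∈ Finset.Icc 1 (n-1), (k : ℝ) = (n : ℝ) * ((n : ℝ) - 1) / 2 := by
    have h1 : ∑ k ∈ Finset.Icc 1 (n-1), (k : ℝ) = ∑ k ∈ Finset.range n, (k : ℝ) := by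
      apply Finset.sum_subset
      · intro x hx; rw [Finset.mem_Icc] at hx; rw [Finset.mem_range]; omega
      · intro x hx hnx
        rw [Finset.mem_range] at hx; rw [Finset.mem_Icc] at hnx
        have : x = 0 := by omega
        simp [this]
    have h2 := Finset.sum_range_id_mul_two n
    have h2' : ((∑ i ∈ Finset.range n, i : ℕ) : ℝ) * 2 = (n : ℝ) * ((n : ℝ) - 1) := by
      rw [← Nat.cast_ofNat, ← Nat.cast_mul, h2]
      have : 1 ≤ n := by omega
      push_cast [this]; ring
    rw [h1]
    push_cast at h2'
    linarith
  rw [← Finset.sum_mul, hgauss] at hT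
  have hTval : T = Ssum / 2 := by rw [hT]; field_simp
  constructor
  · rw [hTval]; ring
  · rw [hTval, hH]
    rw [eq_div_iff (by positivity)]
    field_simp
end

section
/- Fix Δ ∈ (0,1) and suppose the common density g of the overlaps satisfies g(1−x) = c + O(x^δ) as x → 0⁺ for some constants c, δ > 0 (e.g. the uniform distribution on [0,1)). Then there exist positive constants C₁′, C₂′ (independent of n) such that lim_{n→∞} P( C₁′ < N_Δ^{fm} / ((1−Δ)²·n·log n) < C₂′ ) = 1. -/
open MeasureTheory ProbabilityTheory Filter
open Set Topology

lemma tail_fun_measurable {Ω' : Type*} [MeasurableSpace Ω'] (μ : Measure Ω') (Y : Ω' → ℝ) :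
    Measurable (fun t : ℝ => (μ {ω | t < Y ω}).toReal) := by
  have h : Antitone (fun t : ℝ => μ {ω | t < Y ω}) := by
    intro s t hst
    exact measure_mono (fun ω hω => lt_of_le_of_lt hst hω)
  exact ENNReal.measurable_toReal.comp h.measurable

lemma tail_fun_le_one {Ω' : Type*} [MeasurableSpace Ω'] (μ : Measure Ω') [IsProbabilityMeasure μ]
    (Y : Ω' → ℝ) (t : ℝ) : (μ {ω | t < Y ω}).toReal ≤ 1 := by
  have := prob_le_one (μ := μ) (s := {ω | t < Y ω})
  simpa using ENNReal.toReal_mono ENNReal.one_ne_top this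

/-- Layer-cake splitting: for a rv `1 ≤ Y ≤ u`, the mean is between integrals of the tail. -/
lemma layercake_split {Ω' : Type*} [MeasurableSpace Ω'] (μ : Measure Ω') [IsProbabilityMeasure μ]
    (Y : Ω' → ℝ) (hYm : Measurable Y) (u v : ℝ) (hv : 0 < v) (hvu : v ≤ u)
    (hY0 : ∀ ω, 0 ≤ Y ω) (hYu : ∀ ω, Y ω ≤ u) :
    ∫ ω, Y ω ∂μ = (∫ t in Ioc 0 v, (μ {ω | t < Y ω}).toReal)
      + ∫ t in Ioc v u, (μ {ω | t < Y ω}).toReal := by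
  set F : ℝ → ℝ := fun t => (μ {ω | t < Y ω}).toReal with hF
  have hFm : Measurable F := tail_fun_measurable μ Y
  have hF0 : ∀ t, 0 ≤ F t := fun t => ENNReal.toReal_nonneg
  have hF1 : ∀ t, F t ≤ 1 := fun t => tail_fun_le_one μ Y t
  have hFz : ∀ t, u ≤ t → F t = 0 := by
    intro t ht
    have : {ω | t < Y ω} = ∅ := by
      ext ω; simp only [mem_setOf_eq, mem_empty_iff_false, iff_false, not_lt]
      exact (hYu ω).trans ht
    simp [hF, this]
  have hIntY : Integrable Y μ := by
    refine (integrable_const u).mono' hYm.aestronglyMeasurable ?_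
    filter_upwards with ω
    rw [Real.norm_eq_abs, abs_of_nonneg (hY0 ω)]
    exact hYu ω
  have key : ∫ ω, Y ω ∂μ = ∫ t in Ioi 0, F t := hIntY.integral_eq_integral_meas_lt (Filter.Eventually.of_forall hY0)
  have hIocInt : ∀ p q : ℝ, IntegrableOn F (Ioc p q) := by
    intro p q
    refine Integrable.mono' (g := fun _ => (1:ℝ)) ?_ hFm.aestronglyMeasurable.restrict ?_
    · rw [integrable_const_iff]; right
      exact isFiniteMeasure_restrict.mpr measure_Ioc_lt_top.ne
    · filter_upwards with t
      rw [Real.norm_eq_abs, abs_of_nonneg (hF0 t)]; exact hF1 t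
  have hIoiu : ∫ t in Ioi u, F t = 0 := by
    rw [setIntegral_congr_fun measurableSet_Ioi (fun t ht => hFz t (le_of_lt ht))]
    simp
  have hIoiuInt : IntegrableOn F (Ioi u) := by
    exact IntegrableOn.congr_fun integrableOn_zero
      (fun t ht => (hFz t (le_of_lt ht)).symm) measurableSet_Ioi
  have hsplit1 : Ioc 0 u ∪ Ioi u = Ioi (0:ℝ) := Ioc_union_Ioi_eq_Ioi (lt_of_lt_of_le hv hvu).le
  have hsplit2 : Ioc 0 v ∪ Ioc v u = Ioc (0:ℝ) u := Ioc_union_Ioc_eq_Ioc hv.le hvu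
  rw [key, ← hsplit1, setIntegral_union (Ioc_disjoint_Ioi le_rfl) measurableSet_Ioi
      (hIocInt 0 u) hIoiuInt, hIoiu, add_zero, ← hsplit2,
    setIntegral_union (Ioc_disjoint_Ioc_of_le le_rfl) measurableSet_Ioc (hIocInt 0 v) (hIocInt v u)]

lemma trunc_moment_bounds {Ω' : Type*} [MeasurableSpace Ω'] (μ : Measure Ω')
    [IsProbabilityMeasure μ] (W : Ω' → ℝ) (hW : Measurable W) (hW1 : ∀ ω, 1 ≤ W ω)
    (c x₁ u : ℝ) (hc : 0 < c) (hx₁ : 1 ≤ x₁) (hu : x₁ < u)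
    (htl : ∀ x, x₁ ≤ x → ENNReal.ofReal (c/2 * x⁻¹) ≤ μ {ω | x < W ω})
    (htu : ∀ x, x₁ ≤ x → μ {ω | x < W ω} ≤ ENNReal.ofReal (3*c/2 * x⁻¹)) :
    c/2 * (Real.log u - Real.log x₁) ≤ (∫ ω, min (W ω) u ∂μ) ∧
    (∫ ω, min (W ω) u ∂μ) ≤ x₁ + 3*c/2 * Real.log u ∧
    (∫ ω, (min (W ω) u)^2 ∂μ) ≤ x₁^2 + 3*c*u := by
  have hx₁0 : (0:ℝ) < x₁ := lt_of_lt_of_le one_pos hx₁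
  have hu0 : (0:ℝ) < u := hx₁0.trans hu
  set Y : Ω' → ℝ := fun ω => min (W ω) u with hYdef
  have hYm : Measurable Y := hW.min measurable_const
  have hY0 : ∀ ω, 0 ≤ Y ω := fun ω => le_min (le_trans zero_le_one (hW1 ω)) hu0.le
  have hYu : ∀ ω, Y ω ≤ u := fun ω => min_le_right _ _
  set F : ℝ → ℝ := fun t => (μ {ω | t < Y ω}).toReal with hFdef
  have hFm : Measurable F := tail_fun_measurable μ Y
  have hF0 : ∀ t, 0 ≤ F t := fun t => ENNReal.toReal_nonneg
  have hF1 : ∀ t, F t ≤ 1 := fun t => tail_fun_le_one μ Y t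
  have hseteq : ∀ t : ℝ, t < u → {ω | t < Y ω} = {ω | t < W ω} := by
    intro t ht; ext ω; simp only [hYdef, mem_setOf_eq, lt_min_iff]; tauto
  have hFl : ∀ t, x₁ ≤ t → t < u → c/2 * t⁻¹ ≤ F t := by
    intro t ht htu'
    have ht0 : (0:ℝ) < t := lt_of_lt_of_le hx₁0 ht
    have h1 := htl t ht
    rw [← hseteq t htu'] at h1
    have := ENNReal.toReal_mono (measure_ne_top μ _) h1
    rwa [ENNReal.toReal_ofReal (by positivity)] at this
  have hFu : ∀ t, x₁ ≤ t → F t ≤ 3*c/2 * t⁻¹ := by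
    intro t ht
    have ht0 : (0:ℝ) < t := lt_of_lt_of_le hx₁0 ht
    rcases lt_or_ge t u with htu' | htu'
    · have h1 := htu t ht
      rw [← hseteq t htu'] at h1
      have := ENNReal.toReal_mono ENNReal.ofReal_ne_top h1
      rwa [ENNReal.toReal_ofReal (by positivity)] at this
    · have he : {ω | t < Y ω} = ∅ := by
        ext ω; simp only [mem_setOf_eq, mem_empty_iff_false, iff_false, not_lt]
        exact (hYu ω).trans htu'
      simp only [hFdef, he, measure_empty, ENNReal.toReal_zero]
      positivity
  -- integrability facts
  have hIocIntF : ∀ p q : ℝ, IntegrableOn F (Ioc p q) := by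
    intro p q
    refine Integrable.mono' (g := fun _ => (1:ℝ)) ?_ hFm.aestronglyMeasurable.restrict ?_
    · rw [integrable_const_iff]; right; exact isFiniteMeasure_restrict.mpr measure_Ioc_lt_top.ne
    · filter_upwards with t
      rw [Real.norm_eq_abs, abs_of_nonneg (hF0 t)]; exact hF1 t
  have hIntInv : IntegrableOn (fun t : ℝ => c/2 * t⁻¹) (Ioc x₁ u) := by
    have hco : ContinuousOn (fun t : ℝ => c/2 * t⁻¹) (Icc x₁ u) :=
      continuousOn_const.mul (continuousOn_inv₀.mono (fun t ht =>
        (ne_of_gt (lt_of_lt_of_le hx₁0 ht.1))))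
    exact hco.integrableOn_Icc.mono_set Ioc_subset_Icc_self
  have hIntInv' : IntegrableOn (fun t : ℝ => 3*c/2 * t⁻¹) (Ioc x₁ u) := by
    have hco : ContinuousOn (fun t : ℝ => 3*c/2 * t⁻¹) (Icc x₁ u) :=
      continuousOn_const.mul (continuousOn_inv₀.mono (fun t ht =>
        (ne_of_gt (lt_of_lt_of_le hx₁0 ht.1))))
    exact hco.integrableOn_Icc.mono_set Ioc_subset_Icc_self
  have hIntOne : ∀ p q : ℝ, IntegrableOn (fun _ : ℝ => (1:ℝ)) (Ioc p q) := by
    intro p q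
    rw [integrableOn_const_iff]
    exact Or.inr measure_Ioc_lt_top
  have hsplit := layercake_split μ Y hYm u x₁ hx₁0 hu.le hY0 hYu
  have hinvint : ∫ t in Ioc x₁ u, (c/2 * t⁻¹) = c/2 * (Real.log u - Real.log x₁) := by
    rw [← intervalIntegral.integral_of_le hu.le, intervalIntegral.integral_const_mul,
      integral_inv_of_pos hx₁0 hu0, Real.log_div (ne_of_gt hu0) (ne_of_gt hx₁0)]
  have hinvint' : ∫ t in Ioc x₁ u, (3*c/2 * t⁻¹) = 3*c/2 * (Real.log u - Real.log x₁) := by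
    rw [← intervalIntegral.integral_of_le hu.le, intervalIntegral.integral_const_mul,
      integral_inv_of_pos hx₁0 hu0, Real.log_div (ne_of_gt hu0) (ne_of_gt hx₁0)]
  have honeint : ∀ q : ℝ, 0 ≤ q → ∫ t in Ioc (0:ℝ) q, (1:ℝ) = q := by
    intro q hq
    rw [setIntegral_const, Real.volume_real_Ioc, smul_eq_mul, mul_one, sub_zero,
      max_eq_left hq]
  refine ⟨?_, ?_, ?_⟩
  · -- lower bound on the mean
    have step1 : ∫ t in Ioo x₁ u, (c/2 * t⁻¹) ≤ ∫ t in Ioo x₁ u, F t := by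
      refine setIntegral_mono_on (hIntInv.mono_set Ioo_subset_Ioc_self)
        ((hIocIntF x₁ u).mono_set Ioo_subset_Ioc_self) measurableSet_Ioo ?_
      exact fun t ht => hFl t ht.1.le ht.2
    have step2 : ∫ t in Ioc x₁ u, F t ≤ ∫ ω, Y ω ∂μ := by
      rw [hsplit]
      have : (0:ℝ) ≤ ∫ t in Ioc 0 x₁, F t :=
        setIntegral_nonneg measurableSet_Ioc (fun t _ => hF0 t)
      linarith
    calc c/2 * (Real.log u - Real.log x₁) = ∫ t in Ioc x₁ u, (c/2 * t⁻¹) := hinvint.symm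
      _ = ∫ t in Ioo x₁ u, (c/2 * t⁻¹) := integral_Ioc_eq_integral_Ioo
      _ ≤ ∫ t in Ioo x₁ u, F t := step1
      _ = ∫ t in Ioc x₁ u, F t := integral_Ioc_eq_integral_Ioo.symm
      _ ≤ _ := step2
  · -- upper bound on the mean
    have step1 : ∫ t in Ioc 0 x₁, F t ≤ x₁ := by
      have h1 : ∫ t in Ioc 0 x₁, F t ≤ ∫ t in Ioc (0:ℝ) x₁, (1:ℝ) :=
        setIntegral_mono_on (hIocIntF 0 x₁) (hIntOne 0 x₁) measurableSet_Ioc (fun t _ => hF1 t)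
      rwa [honeint x₁ hx₁0.le] at h1
    have step2 : ∫ t in Ioc x₁ u, F t ≤ 3*c/2 * Real.log u := by
      have h1 : ∫ t in Ioc x₁ u, F t ≤ ∫ t in Ioc x₁ u, (3*c/2 * t⁻¹) :=
        setIntegral_mono_on (hIocIntF x₁ u) hIntInv' measurableSet_Ioc
          (fun t ht => hFu t ht.1.le)
      rw [hinvint'] at h1
      have hlx : 0 ≤ Real.log x₁ := Real.log_nonneg hx₁
      nlinarith
    rw [hsplit]; linarith
  · -- second moment
    have hY2m : Measurable (fun ω => (Y ω)^2) := hYm.pow_const 2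
    have hY20 : ∀ ω, 0 ≤ (Y ω)^2 := fun ω => sq_nonneg _
    have hY2u : ∀ ω, (Y ω)^2 ≤ u^2 := fun ω => pow_le_pow_left₀ (hY0 ω) (hYu ω) 2
    have hx₁sq : (0:ℝ) < x₁^2 := by positivity
    have husq : x₁^2 ≤ u^2 := by nlinarith
    have hsplit2 := layercake_split μ (fun ω => (Y ω)^2) hY2m (u^2) (x₁^2) hx₁sq husq hY20 hY2u
    set G : ℝ → ℝ := fun t => (μ {ω | t < (Y ω)^2}).toReal with hGdef
    have hGm : Measurable G := tail_fun_measurable μ _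
    have hG0 : ∀ t, 0 ≤ G t := fun t => ENNReal.toReal_nonneg
    have hG1 : ∀ t, G t ≤ 1 := fun t => tail_fun_le_one μ _ t
    have hGu : ∀ t, x₁^2 ≤ t → G t ≤ 3*c/2 * (Real.sqrt t)⁻¹ := by
      intro t ht
      have ht0 : (0:ℝ) < t := lt_of_lt_of_le hx₁sq ht
      have hst0 : 0 < Real.sqrt t := Real.sqrt_pos.mpr ht0
      rcases lt_or_ge t (u^2) with htu' | htu'
      · have hseteq2 : {ω | t < (Y ω)^2} = {ω | Real.sqrt t < W ω} := by
          ext ω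
          have hyω : 0 < Y ω := lt_of_lt_of_le zero_lt_one (le_min (hW1 ω) (le_trans hx₁ hu.le))
          simp only [mem_setOf_eq]
          rw [← Real.sqrt_lt' hyω]
          constructor
          · intro h; exact lt_of_lt_of_le h (min_le_left _ _)
          · intro h
            have hstu : Real.sqrt t < u := (Real.sqrt_lt' hu0).mpr htu'
            exact lt_min h hstu
        have hx₁st : x₁ ≤ Real.sqrt t := by
          rw [Real.le_sqrt hx₁0.le ht0.le]; exact ht
        have h1 := htu (Real.sqrt t) hx₁st
        rw [← hseteq2] at h1
        have := ENNReal.toReal_mono ENNReal.ofReal_ne_top h1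
        rwa [ENNReal.toReal_ofReal (by positivity)] at this
      · have he : {ω | t < (Y ω)^2} = ∅ := by
          ext ω; simp only [mem_setOf_eq, mem_empty_iff_false, iff_false, not_lt]
          exact (hY2u ω).trans htu'
        simp only [hGdef, he, measure_empty, ENNReal.toReal_zero]
        positivity
    have hIocIntG : ∀ p q : ℝ, IntegrableOn G (Ioc p q) := by
      intro p q
      refine Integrable.mono' (g := fun _ => (1:ℝ)) ?_ hGm.aestronglyMeasurable.restrict ?_
      · rw [integrable_const_iff]; right; exact isFiniteMeasure_restrict.mpr measure_Ioc_lt_top.ne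
      · filter_upwards with t
        rw [Real.norm_eq_abs, abs_of_nonneg (hG0 t)]; exact hG1 t
    have hIntSqrt : IntegrableOn (fun t : ℝ => 3*c/2 * (Real.sqrt t)⁻¹) (Ioc (x₁^2) (u^2)) := by
      have hco : ContinuousOn (fun t : ℝ => 3*c/2 * (Real.sqrt t)⁻¹) (Icc (x₁^2) (u^2)) := by
        refine continuousOn_const.mul (ContinuousOn.inv₀ (Real.continuous_sqrt.continuousOn) ?_)
        intro t ht
        exact ne_of_gt (Real.sqrt_pos.mpr (lt_of_lt_of_le hx₁sq ht.1))
      exact hco.integrableOn_Icc.mono_set Ioc_subset_Icc_self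
    have hsqrtint : ∫ t in Ioc (x₁^2) (u^2), (Real.sqrt t)⁻¹ = 2*(u - x₁) := by
      rw [← intervalIntegral.integral_of_le husq]
      have hcong : ∀ t ∈ uIcc (x₁^2) (u^2), (Real.sqrt t)⁻¹ = t ^ (-(1/2) : ℝ) := by
        intro t ht
        rw [uIcc_of_le husq] at ht
        have ht0 : (0:ℝ) < t := lt_of_lt_of_le hx₁sq ht.1
        rw [Real.sqrt_eq_rpow, ← Real.rpow_neg ht0.le]
      rw [intervalIntegral.integral_congr hcong, integral_rpow (Or.inl (by norm_num))]
      have e1 : (u^2 : ℝ) ^ ((-(1/2):ℝ) + 1) = u := by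
        rw [show (-(1/2):ℝ) + 1 = 1/2 by norm_num, ← Real.sqrt_eq_rpow, Real.sqrt_sq hu0.le]
      have e2 : (x₁^2 : ℝ) ^ ((-(1/2):ℝ) + 1) = x₁ := by
        rw [show (-(1/2):ℝ) + 1 = 1/2 by norm_num, ← Real.sqrt_eq_rpow, Real.sqrt_sq hx₁0.le]
      rw [e1, e2]
      ring
    have step1 : ∫ t in Ioc 0 (x₁^2), G t ≤ x₁^2 := by
      have h1 : ∫ t in Ioc 0 (x₁^2), G t ≤ ∫ t in Ioc (0:ℝ) (x₁^2), (1:ℝ) :=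
        setIntegral_mono_on (hIocIntG 0 (x₁^2)) (hIntOne 0 (x₁^2)) measurableSet_Ioc
          (fun t _ => hG1 t)
      rwa [honeint (x₁^2) hx₁sq.le] at h1
    have step2 : ∫ t in Ioc (x₁^2) (u^2), G t ≤ 3*c*u := by
      have h1 : ∫ t in Ioc (x₁^2) (u^2), G t ≤ ∫ t in Ioc (x₁^2) (u^2),
          (3*c/2 * (Real.sqrt t)⁻¹) :=
        setIntegral_mono_on (hIocIntG _ _) hIntSqrt measurableSet_Ioc
          (fun t ht => hGu t ht.1.le)
      rw [integral_const_mul, hsqrtint] at h1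
      nlinarith
    rw [hsplit2]; linarith

lemma density_tail {Ω : Type*} [MeasurableSpace Ω] (P : Measure Ω)
    (W : Ω → ℝ) (hW : Measurable W) (hval : ∀ ω, W ω ∈ Set.Ico (0:ℝ) 1)
    (g : ℝ → ℝ) (hpdf : Measure.map W P = volume.withDensity (fun t => ENNReal.ofReal (g t)))
    (c τ : ℝ) (hτ0 : 0 < τ)
    (hlo : ∀ s ∈ Set.Ioo (1-τ) 1, c/2 ≤ g s) (hhi : ∀ s ∈ Set.Ioo (1-τ) 1, g s ≤ 3*c/2) :
    ENNReal.ofReal (c/2 * τ) ≤ P {ω | 1 - τ < W ω} ∧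
      P {ω | 1 - τ < W ω} ≤ ENNReal.ofReal (3*c/2 * τ) := by
  have hset : {ω | 1 - τ < W ω} = W ⁻¹' (Set.Ioo (1-τ) 1) := by
    ext ω
    simp only [mem_setOf_eq, mem_preimage, mem_Ioo]
    exact ⟨fun h => ⟨h, (hval ω).2⟩, fun h => h.1⟩
  have hPeq : P {ω | 1 - τ < W ω} = ∫⁻ s in Set.Ioo (1-τ) 1, ENNReal.ofReal (g s) := by
    rw [hset, ← Measure.map_apply hW measurableSet_Ioo, hpdf,
      withDensity_apply _ measurableSet_Ioo]
  have hvol : volume (Set.Ioo (1-τ) 1) = ENNReal.ofReal τ := by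
    rw [Real.volume_Ioo]; congr 1; ring
  constructor
  · rw [hPeq]
    calc ENNReal.ofReal (c/2 * τ) = ENNReal.ofReal (c/2) * ENNReal.ofReal τ := by
          rcases le_or_gt 0 (c/2) with h | h
          · rw [← ENNReal.ofReal_mul h]
          · rw [ENNReal.ofReal_of_nonpos h.le, zero_mul,
              ENNReal.ofReal_of_nonpos (by nlinarith)]
      _ = ∫⁻ _ in Set.Ioo (1-τ) 1, ENNReal.ofReal (c/2) := by
          rw [setLIntegral_const, hvol]
      _ ≤ ∫⁻ s in Set.Ioo (1-τ) 1, ENNReal.ofReal (g s) := by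
          refine lintegral_mono_ae ?_
          filter_upwards [ae_restrict_mem measurableSet_Ioo] with s hs
          exact ENNReal.ofReal_le_ofReal (hlo s hs)
  · rw [hPeq]
    calc ∫⁻ s in Set.Ioo (1-τ) 1, ENNReal.ofReal (g s)
        ≤ ∫⁻ _ in Set.Ioo (1-τ) 1, ENNReal.ofReal (3*c/2) := by
          refine lintegral_mono_ae ?_
          filter_upwards [ae_restrict_mem measurableSet_Ioo] with s hs
          exact ENNReal.ofReal_le_ofReal (hhi s hs)
      _ = ENNReal.ofReal (3*c/2) * ENNReal.ofReal τ := by rw [setLIntegral_const, hvol]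
      _ ≤ ENNReal.ofReal (3*c/2 * τ) := by
          rcases le_or_gt 0 (3*c/2) with h | h
          · rw [← ENNReal.ofReal_mul h]
          · rw [ENNReal.ofReal_of_nonpos h.le, zero_mul]; exact zero_le

set_option maxHeartbeats 2000000 in
/-- **Convergence time for learning with full memory, uniform-like overlaps.**
The overlaps `a 2, a 3, …` are i.i.d. with values in `[0,1)` and density `g` satisfying
`g(1-t) = c + O(t^δ)` as `t → 0⁺`.  With
`Nfm n ω = (M(M+1)/(2n(n-1))) ∑_{i=2}^n 1/(1 - aᵢ)`, `M = ⌊(1-Δ)n⌋`, the expected number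
of sampling events needed by the learner with full memory to reach probability `1 - Δ`
of finding the correct set, there are constants `0 < C₁' < C₂'` with
`P(C₁' < Nfm/((1-Δ)² n log n) < C₂') → 1` as `n → ∞`. -/
theorem full_memory_learner_time_beta_zero
    {Ω : Type*} [MeasurableSpace Ω] (P : Measure Ω) [IsProbabilityMeasure P]
    (a : ℕ → Ω → ℝ) (hmeas : ∀ i, Measurable (a i))
    (hindep : iIndepFun a P)
    (hval : ∀ i ω, a i ω ∈ Set.Ico (0 : ℝ) 1)
    (g : ℝ → ℝ)
    (hpdf : ∀ i, Measure.map (a i) P = volume.withDensity (fun t => ENNReal.ofReal (g t)))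
    (c δ : ℝ) (hc : 0 < c) (hδ : 0 < δ)
    (hg : (fun t => g (1 - t) - c) =O[nhdsWithin 0 (Set.Ioi 0)] (fun t => t ^ δ))
    (Δ : ℝ) (hΔ : 0 < Δ) (hΔ' : Δ < 1)
    (Nfm : ℕ → Ω → ℝ)
    (hNfm : ∀ n ω, Nfm n ω =
      ((⌊(1 - Δ) * n⌋₊ : ℝ) * ((⌊(1 - Δ) * n⌋₊ : ℝ) + 1) / (2 * n * ((n : ℝ) - 1))) *
        ∑ i ∈ Finset.Icc 2 n, 1 / (1 - a i ω)) :
    ∃ C₁ C₂ : ℝ, 0 < C₁ ∧ 0 < C₂ ∧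
      Tendsto (fun n : ℕ =>
          P {ω | C₁ < Nfm n ω / ((1 - Δ) ^ 2 * n * Real.log n) ∧
                 Nfm n ω / ((1 - Δ) ^ 2 * n * Real.log n) < C₂})
        atTop (nhds 1) := by
  set γ : ℝ := 1 - Δ with hγdef
  have hγ0 : 0 < γ := by simp only [hγdef]; linarith
  have hγ1 : γ < 1 := by simp only [hγdef]; linarith
  -- the random variables X i = 1/(1 - a i)
  set X : ℕ → Ω → ℝ := fun i ω => (1 - a i ω)⁻¹ with hXdef
  have hsub : ∀ i ω, 0 < 1 - a i ω := fun i ω => by have := (hval i ω).2; linarith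
  have hsub1 : ∀ i ω, 1 - a i ω ≤ 1 := fun i ω => by have := (hval i ω).1; linarith
  have hmX : ∀ i, Measurable (X i) := fun i => ((measurable_const.sub (hmeas i))).inv
  have h1X : ∀ i ω, 1 ≤ X i ω := fun i ω =>
    (one_le_inv₀ (hsub i ω)).mpr (hsub1 i ω)
  -- extract the tail control from the big-O hypothesis
  obtain ⟨A, hA⟩ := hg.bound
  rw [eventually_nhdsWithin_iff, Metric.eventually_nhds_iff] at hA
  obtain ⟨ε, hε0, hε⟩ := hA
  set B : ℝ := max A 1 with hBdef
  have hB1 : (1:ℝ) ≤ B := le_max_right _ _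
  have hB0 : (0:ℝ) < B := lt_of_lt_of_le one_pos hB1
  set τ₀ : ℝ := min (min (ε/2) ((c/(2*B)) ^ (δ⁻¹))) 1 with hτ₀def
  have hcB : (0:ℝ) < c/(2*B) := by positivity
  have hτ₀0 : 0 < τ₀ := by
    refine lt_min (lt_min (by positivity) ?_) one_pos
    exact Real.rpow_pos_of_pos hcB _
  have hτ₀1 : τ₀ ≤ 1 := min_le_right _ _
  have hglo : ∀ s ∈ Set.Ioo (1-τ₀) 1, c/2 ≤ g s ∧ g s ≤ 3*c/2 := by
    intro s hs
    set t : ℝ := 1 - s with htdef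
    have ht0 : 0 < t := by simp only [htdef]; linarith [hs.2]
    have htτ : t < τ₀ := by simp only [htdef]; linarith [hs.1]
    have htε : dist t 0 < ε := by
      rw [Real.dist_eq, sub_zero, abs_of_pos ht0]
      calc t < τ₀ := htτ
        _ ≤ ε/2 := le_trans (min_le_left _ _) (min_le_left _ _)
        _ < ε := by linarith
    have hbound := hε htε (mem_Ioi.mpr ht0)
    have hs_eq : 1 - t = s := by simp [htdef]
    rw [hs_eq] at hbound
    have htδ : t ^ δ ≤ (c/(2*B)) := by
      calc t ^ δ ≤ τ₀ ^ δ := Real.rpow_le_rpow ht0.le htτ.le hδ.le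
        _ ≤ ((c/(2*B)) ^ (δ⁻¹)) ^ δ :=
            Real.rpow_le_rpow hτ₀0.le (le_trans (min_le_left _ _) (min_le_right _ _)) hδ.le
        _ = c/(2*B) := Real.rpow_inv_rpow hcB.le (ne_of_gt hδ)
    have habs : |g s - c| ≤ c/2 := by
      have h1 : ‖g s - c‖ ≤ A * ‖t ^ δ‖ := hbound
      rw [Real.norm_eq_abs, Real.norm_eq_abs] at h1
      have h2 : |t ^ δ| = t ^ δ := abs_of_nonneg (Real.rpow_nonneg ht0.le _)
      rw [h2] at h1
      have h3 : A * t ^ δ ≤ B * (c/(2*B)) := by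
        have hA_le : A ≤ B := le_max_left _ _
        have htδ0 : 0 ≤ t ^ δ := Real.rpow_nonneg ht0.le _
        nlinarith [Real.rpow_nonneg ht0.le δ]
      have h4 : B * (c/(2*B)) = c/2 := by field_simp
      linarith
    rw [abs_le] at habs
    constructor <;> linarith [habs.1, habs.2]
  -- tail bounds for X i
  set x₁ : ℝ := τ₀⁻¹ with hx₁def
  have hx₁1 : 1 ≤ x₁ := (one_le_inv₀ hτ₀0).mpr hτ₀1
  have hx₁0 : 0 < x₁ := lt_of_lt_of_le one_pos hx₁1
  have hXtail : ∀ i x, x₁ ≤ x →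
      ENNReal.ofReal (c/2 * x⁻¹) ≤ P {ω | x < X i ω} ∧
      P {ω | x < X i ω} ≤ ENNReal.ofReal (3*c/2 * x⁻¹) := by
    intro i x hx
    have hx0 : 0 < x := lt_of_lt_of_le hx₁0 hx
    have hτx0 : 0 < x⁻¹ := by positivity
    have hτxτ₀ : x⁻¹ ≤ τ₀ := by
      rw [← inv_inv τ₀]
      exact (inv_le_inv₀ hx0 (by positivity)).mpr hx
    have hseteq : {ω | x < X i ω} = {ω | 1 - x⁻¹ < a i ω} := by
      ext ω
      simp only [hXdef, mem_setOf_eq]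
      rw [lt_inv_comm₀ hx0 (hsub i ω)]
      constructor <;> intro h <;> linarith
    have hsubIoo : Set.Ioo (1 - x⁻¹) 1 ⊆ Set.Ioo (1 - τ₀) 1 := by
      apply Set.Ioo_subset_Ioo _ le_rfl
      linarith
    have := density_tail P (a i) (hmeas i) (hval i) g (hpdf i) c (x⁻¹) hτx0
      (fun s hs => (hglo s (hsubIoo hs)).1) (fun s hs => (hglo s (hsubIoo hs)).2)
    rw [← hseteq] at this
    exact this
  -- constants
  set K₁ : ℝ := 64*(x₁^2+3*c)/c^2 with hK₁def
  have hK₁0 : 0 < K₁ := by positivity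
  set K : ℝ := K₁ + 3*c/2 with hKdef
  have hK0 : 0 < K := by positivity
  refine ⟨c/64, (1+4*c)/γ + 1, by positivity, by positivity, ?_⟩
  -- the main estimate, for n large enough
  have main : ∀ᶠ n : ℕ in atTop,
      ENNReal.ofReal (1 - K / Real.log n) ≤
        P {ω | c/64 < Nfm n ω / (γ ^ 2 * n * Real.log n) ∧
               Nfm n ω / (γ ^ 2 * n * Real.log n) < (1+4*c)/γ + 1} := by
    filter_upwards [eventually_ge_atTop 3,
      (Real.tendsto_log_atTop.comp tendsto_natCast_atTop_atTop).eventually_ge_atTop x₁,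
      tendsto_natCast_atTop_atTop.eventually_ge_atTop (2/γ),
      tendsto_natCast_atTop_atTop.eventually_ge_atTop (1/Δ)] with n hn3 hlx hnγ hnΔ
    have hn3' : (3:ℝ) ≤ (n:ℝ) := by exact_mod_cast hn3
    have hn0 : (0:ℝ) < n := by linarith
    have hlx' : x₁ ≤ Real.log n := hlx
    have hlog1 : 1 ≤ Real.log n := le_trans hx₁1 hlx'
    have hlogpos : 0 < Real.log n := lt_of_lt_of_le one_pos hlog1
    set u : ℝ := (n:ℝ) * Real.log n with hudef
    have hu1 : 1 ≤ u := by
      have h1 : (3:ℝ)*1 ≤ (n:ℝ) * Real.log n := by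
        apply mul_le_mul hn3' hlog1 one_pos.le hn0.le
      rw [hudef]; linarith
    have hx₁u : x₁ < u := by
      have h1 : 3*x₁ ≤ (n:ℝ) * Real.log n := mul_le_mul hn3' hlx' hx₁0.le hn0.le
      rw [hudef]; linarith
    set φ : ℝ → ℝ := fun s => min (1-s)⁻¹ u with hφdef
    have hφm : Measurable φ := ((measurable_const.sub measurable_id).inv).min measurable_const
    have htmb := trunc_moment_bounds P (X 2) (hmX 2) (h1X 2) c x₁ u hc hx₁1 hx₁u
      (fun x hx => (hXtail 2 x hx).1) (fun x hx => (hXtail 2 x hx).2)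
    set m : ℝ := ∫ ω, min (X 2 ω) u ∂P with hmdef
    set q : ℝ := ∫ ω, (min (X 2 ω) u)^2 ∂P with hqdef
    set Z : ℕ → Ω → ℝ := fun i ω => φ (a i ω) with hZdef
    have hZ_eq : ∀ i ω, Z i ω = min (X i ω) u := fun i ω => rfl
    have hZm : ∀ i, Measurable (Z i) := fun i => hφm.comp (hmeas i)
    have hZ1 : ∀ i ω, 1 ≤ Z i ω := fun i ω => by
      rw [hZ_eq]; exact le_min (h1X i ω) hu1
    have hZu : ∀ i ω, Z i ω ≤ u := fun i ω => by rw [hZ_eq]; exact min_le_right _ _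
    have hZmem : ∀ i, MemLp (Z i) 2 P := by
      intro i
      refine MemLp.of_bound (hZm i).aestronglyMeasurable u (ae_of_all _ fun ω => ?_)
      rw [Real.norm_eq_abs, abs_of_nonneg (le_trans zero_le_one (hZ1 i ω))]
      exact hZu i ω
    have hEZ : ∀ i, ∫ ω, Z i ω ∂P = m := by
      intro i
      have h1 : ∫ ω, Z i ω ∂P = ∫ s, φ s ∂(Measure.map (a i) P) :=
        (integral_map (hmeas i).aemeasurable hφm.aestronglyMeasurable).symm
      rw [h1, hpdf i, ← hpdf 2, integral_map (hmeas 2).aemeasurable hφm.aestronglyMeasurable]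
    have hEZ2 : ∀ i, ∫ ω, (Z i ω)^2 ∂P = q := by
      intro i
      have hφ2m : Measurable (fun s => (φ s)^2) := hφm.pow_const 2
      have h1 : ∫ ω, (Z i ω)^2 ∂P = ∫ s, (φ s)^2 ∂(Measure.map (a i) P) :=
        (integral_map (hmeas i).aemeasurable hφ2m.aestronglyMeasurable).symm
      rw [h1, hpdf i, ← hpdf 2, integral_map (hmeas 2).aemeasurable hφ2m.aestronglyMeasurable]
    set T : Ω → ℝ := ∑ i ∈ Finset.Icc 2 n, Z i with hTdef
    have hTapp : ∀ ω, T ω = ∑ i ∈ Finset.Icc 2 n, Z i ω := fun ω => by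
      rw [hTdef]; exact Finset.sum_apply ω (Finset.Icc 2 n) Z
    have hTm : Measurable T := by
      have he : T = fun ω => ∑ i ∈ Finset.Icc 2 n, Z i ω := funext hTapp
      rw [he]; exact Finset.measurable_sum _ (fun i _ => hZm i)
    have hTmem : MemLp T 2 P := memLp_finset_sum' _ (fun i _ => hZmem i)
    set κ : ℕ := (Finset.Icc 2 n).card with hκdef
    have hκn : κ = n - 1 := by rw [hκdef, Nat.card_Icc]; omega
    have hκR : (κ:ℝ) = (n:ℝ) - 1 := by
      rw [hκn]
      have : (1:ℕ) ≤ n := le_trans (by norm_num) hn3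
      push_cast [Nat.cast_sub this]
      ring
    have hκR' : (κ:ℝ) ≤ (n:ℝ) := by rw [hκR]; linarith
    have hET : ∫ ω, T ω ∂P = (κ:ℝ) * m := by
      have h1 : ∫ ω, T ω ∂P = ∑ i ∈ Finset.Icc 2 n, ∫ ω, Z i ω ∂P := by
        simp_rw [hTapp]
        exact integral_finset_sum _ (fun i _ => (hZmem i).integrable one_le_two)
      rw [h1]
      rw [Finset.sum_congr rfl (fun i _ => hEZ i), Finset.sum_const, nsmul_eq_mul]
    -- variance bound
    have hps : Set.Pairwise ↑(Finset.Icc 2 n) fun i j => IndepFun (Z i) (Z j) P :=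
      fun i _ j _ hij => (hindep.indepFun hij).comp hφm hφm
    have hVar : variance T P ≤ (κ:ℝ) * q := by
      rw [hTdef, IndepFun.variance_sum (fun i _ => hZmem i) hps]
      calc ∑ i ∈ Finset.Icc 2 n, variance (Z i) P
          ≤ ∑ _i ∈ Finset.Icc 2 n, q := by
            refine Finset.sum_le_sum (fun i _ => ?_)
            have h1 := variance_le_expectation_sq (μ := P) (hZm i).aestronglyMeasurable
            have h2 : (∫ ω, (Z i ^ 2) ω ∂P) = q := by
              simp only [Pi.pow_apply]
              exact hEZ2 i
            calc variance (Z i) P ≤ ∫ ω, (Z i ^ 2) ω ∂P := h1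
              _ = q := h2
        _ = (κ:ℝ) * q := by rw [Finset.sum_const, nsmul_eq_mul]
    have hq_up : q ≤ x₁^2 + 3*c*u := htmb.2.2
    have hq0 : 0 ≤ q := by
      rw [hqdef]
      exact integral_nonneg (fun ω => sq_nonneg _)
    set d : ℝ := c/8 * u with hddef
    have hd0 : 0 < d := by positivity
    have hCheb := meas_ge_le_variance_div_sq (μ := P) hTmem hd0
    have hVar' : variance T P ≤ (x₁^2+3*c) * u * (n:ℝ) := by
      have h1 : q ≤ (x₁^2+3*c) * u := by
        have hx2u : x₁^2 ≤ x₁^2 * u := le_mul_of_one_le_right (sq_nonneg _) hu1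
        calc q ≤ x₁^2 + 3*c*u := hq_up
          _ ≤ x₁^2*u + 3*c*u := by linarith
          _ = (x₁^2+3*c)*u := by ring
      have h2 : (κ:ℝ) * q ≤ (n:ℝ) * ((x₁^2+3*c)*u) :=
        mul_le_mul hκR' h1 hq0 hn0.le
      have h3 : (n:ℝ)*((x₁^2+3*c)*u) = (x₁^2+3*c)*u*(n:ℝ) := by ring
      linarith [hVar]
    have hChebBound : variance T P / d^2 ≤ K₁ / Real.log n := by
      rw [div_le_div_iff₀ (by positivity) hlogpos]
      have hKd : K₁ * d^2 = (x₁^2+3*c) * u^2 := by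
        rw [hK₁def, hddef]
        field_simp
        ring
      have husq : u^2 = u * ((n:ℝ) * Real.log n) := by rw [hudef]; ring
      have h3 : variance T P * Real.log n ≤ (x₁^2+3*c) * u * (n:ℝ) * Real.log n := by
        apply mul_le_mul_of_nonneg_right hVar' hlogpos.le
      have h4 : (x₁^2+3*c)*u*(n:ℝ)*Real.log n = (x₁^2+3*c)*(u*((n:ℝ)*Real.log n)) := by ring
      rw [hKd, husq]
      linarith
    have hCheb' : P {ω | d ≤ |T ω - ∫ ω', T ω' ∂P|} ≤ ENNReal.ofReal (K₁ / Real.log n) :=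
      hCheb.trans (ENNReal.ofReal_le_ofReal hChebBound)
    -- exceedance bound
    set Eexc : Set Ω := ⋃ i ∈ Finset.Icc 2 n, {ω | u < X i ω} with hEdef
    have hexc : P Eexc ≤ ENNReal.ofReal ((3*c/2) / Real.log n) := by
      have hκle : (κ : ENNReal) ≤ (n : ENNReal) := by
        refine Nat.cast_le.mpr ?_
        rw [hκn]; omega
      have hn' : (n:ℝ) ≠ 0 := ne_of_gt hn0
      have hl' : Real.log (n:ℝ) ≠ 0 := ne_of_gt hlogpos
      calc P Eexc ≤ ∑ i ∈ Finset.Icc 2 n, P {ω | u < X i ω} :=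
            measure_biUnion_finset_le _ _
        _ ≤ ∑ _i ∈ Finset.Icc 2 n, ENNReal.ofReal (3*c/2 * u⁻¹) :=
            Finset.sum_le_sum (fun i _ => (hXtail i u hx₁u.le).2)
        _ = (κ : ENNReal) * ENNReal.ofReal (3*c/2 * u⁻¹) := by
            rw [Finset.sum_const, nsmul_eq_mul]
        _ ≤ (n : ENNReal) * ENNReal.ofReal (3*c/2 * u⁻¹) := mul_le_mul_left hκle _
        _ = ENNReal.ofReal ((n:ℝ) * (3*c/2 * u⁻¹)) := by
            rw [← ENNReal.ofReal_natCast n, ← ENNReal.ofReal_mul (Nat.cast_nonneg n)]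
        _ = ENNReal.ofReal ((3*c/2) / Real.log n) := by
            congr 1
            rw [hudef, mul_inv]
            field_simp
    -- the bad event
    set Bad : Set Ω := {ω | d ≤ |T ω - ∫ ω', T ω' ∂P|} ∪ Eexc with hBaddef
    have hBadmeas : MeasurableSet Bad := by
      rw [hBaddef]
      refine MeasurableSet.union ?_ ?_
      · exact measurableSet_le measurable_const ((hTm.sub measurable_const).abs)
      · exact MeasurableSet.biUnion (Finset.Icc 2 n).countable_toSet
          (fun i _ => measurableSet_lt measurable_const (hmX i))
    have hPBad : P Bad ≤ ENNReal.ofReal (K / Real.log n) := by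
      calc P Bad ≤ P {ω | d ≤ |T ω - ∫ ω', T ω' ∂P|} + P Eexc := measure_union_le _ _
        _ ≤ ENNReal.ofReal (K₁ / Real.log n) + ENNReal.ofReal ((3*c/2) / Real.log n) :=
            add_le_add hCheb' hexc
        _ = ENNReal.ofReal (K₁ / Real.log n + (3*c/2) / Real.log n) :=
            (ENNReal.ofReal_add (div_nonneg hK₁0.le hlogpos.le)
              (div_nonneg (by linarith) hlogpos.le)).symm
        _ = ENNReal.ofReal (K / Real.log n) := by rw [hKdef, ← add_div]
    -- the good event is contained in the target event
    have hGood : Badᶜ ⊆ {ω | c/64 < Nfm n ω / (γ ^ 2 * n * Real.log n) ∧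
               Nfm n ω / (γ ^ 2 * n * Real.log n) < (1+4*c)/γ + 1} := by
      intro ω hω
      rw [hBaddef, Set.compl_union] at hω
      obtain ⟨hω1, hω2⟩ := hω
      have hTd : |T ω - ∫ ω', T ω' ∂P| < d := not_le.mp hω1
      have hXle : ∀ i ∈ Finset.Icc 2 n, X i ω ≤ u := by
        intro i hi
        by_contra hlt
        exact hω2 (Set.mem_biUnion hi (not_le.mp hlt))
      have hTS : T ω = ∑ i ∈ Finset.Icc 2 n, X i ω := by
        rw [hTapp]
        exact Finset.sum_congr rfl (fun i hi => by rw [hZ_eq]; exact min_eq_left (hXle i hi))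
      set Ssum : ℝ := ∑ i ∈ Finset.Icc 2 n, X i ω with hSdef
      -- moment bounds give bounds on the sum
      have hlogu : Real.log u = Real.log n + Real.log (Real.log n) := by
        rw [hudef, Real.log_mul (by positivity) (by positivity)]
      have hloglog_ge : Real.log x₁ ≤ Real.log (Real.log n) := Real.log_le_log hx₁0 hlx'
      have hloglog_le : Real.log (Real.log n) ≤ Real.log n := by
        have h1 := Real.log_le_sub_one_of_pos hlogpos
        linarith
      have hm_lo : c/2 * Real.log n ≤ m := by
        have h1 := htmb.1
        have h2 : Real.log n ≤ Real.log u - Real.log x₁ := by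
          rw [hlogu]; linarith
        have h3 : c/2 * Real.log n ≤ c/2 * (Real.log u - Real.log x₁) :=
          mul_le_mul_of_nonneg_left h2 (by positivity)
        linarith
      have hm_up : m ≤ (1 + 3*c) * Real.log n := by
        have h1 := htmb.2.1
        have h2 : Real.log u ≤ 2 * Real.log n := by rw [hlogu]; linarith
        have h3 : 3*c/2 * Real.log u ≤ 3*c/2 * (2 * Real.log n) :=
          mul_le_mul_of_nonneg_left h2 (by positivity)
        have h4 : m ≤ x₁ + 3*c/2 * (2 * Real.log n) := by linarith
        have h5 : (1 + 3*c) * Real.log n = Real.log n + 3*c/2 * (2*Real.log n) := by ring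
        linarith
      have hm0 : 0 ≤ m := le_trans (by positivity) hm_lo
      have hET_lo : c/4 * ((n:ℝ) * Real.log n) ≤ (κ:ℝ) * m := by
        have h1 : (n:ℝ)/2 ≤ (κ:ℝ) := by rw [hκR]; linarith
        have s1 : ((n:ℝ)/2) * m ≤ (κ:ℝ) * m := mul_le_mul_of_nonneg_right h1 hm0
        have s2 : ((n:ℝ)/2) * (c/2 * Real.log n) ≤ ((n:ℝ)/2) * m :=
          mul_le_mul_of_nonneg_left hm_lo (by positivity)
        have s3 : c/4 * ((n:ℝ) * Real.log n) = ((n:ℝ)/2) * (c/2 * Real.log n) := by ring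
        linarith
      have hET_up : (κ:ℝ) * m ≤ (1+3*c) * ((n:ℝ) * Real.log n) := by
        have s1 : (κ:ℝ) * m ≤ (n:ℝ) * m := mul_le_mul_of_nonneg_right hκR' hm0
        have s2 : (n:ℝ) * m ≤ (n:ℝ) * ((1+3*c) * Real.log n) :=
          mul_le_mul_of_nonneg_left hm_up hn0.le
        have s3 : (n:ℝ) * ((1+3*c) * Real.log n) = (1+3*c) * ((n:ℝ) * Real.log n) := by ring
        linarith
      rw [hET, abs_lt] at hTd
      rw [hTS] at hTd
      have hd_eq : d = c/8 * ((n:ℝ) * Real.log n) := by rw [hddef, hudef]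
      have hS_lo : c/8 * ((n:ℝ) * Real.log n) < Ssum := by
        have h1 := hTd.1
        rw [hd_eq] at h1
        linarith
      have hS_up : Ssum < (1+4*c) * ((n:ℝ) * Real.log n) := by
        have h1 := hTd.2
        rw [hd_eq] at h1
        have h2 : 0 ≤ c * ((n:ℝ) * Real.log n) := by positivity
        linarith only [h1, hET_up, h2]
      have hS0 : 0 < Ssum := lt_trans (by positivity) hS_lo
      -- floor estimates
      have hγn2 : 2 ≤ γ * n := by
        rw [div_le_iff₀ hγ0] at hnγ
        linarith
      have hΔn1 : 1 ≤ Δ * n := by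
        rw [div_le_iff₀ hΔ] at hnΔ
        linarith
      clear_value γ
      set M : ℕ := ⌊γ * (n:ℝ)⌋₊ with hMdef
      have hM_le : (M:ℝ) ≤ γ * n := Nat.floor_le (by positivity)
      have hM_ge : γ * n - 1 ≤ (M:ℝ) := by
        have := Nat.lt_floor_add_one (γ * (n:ℝ))
        linarith
      have hM_ge' : γ * n / 2 ≤ (M:ℝ) := by linarith only [hM_ge, hγn2]
      have hM1_le : (M:ℝ) + 1 ≤ (n:ℝ) := by
        have h1 : γ * (n:ℝ) = (n:ℝ) - Δ * n := by rw [hγdef]; ring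
        linarith
      have hM0 : (0:ℝ) ≤ (M:ℝ) := Nat.cast_nonneg _
      set p : ℝ := (M:ℝ) * ((M:ℝ) + 1) / (2 * n * ((n:ℝ) - 1)) with hpdef
      clear_value p M
      have h2n0 : (0:ℝ) < 2 * n * ((n:ℝ) - 1) := by
        have h1 : (0:ℝ) < n * ((n:ℝ) - 1) := mul_pos hn0 (by linarith only [hn3'])
        linarith only [h1]
      have hγn0 : (0:ℝ) ≤ γ * n := by positivity
      have hp_lo : γ^2/8 ≤ p := by
        rw [hpdef, le_div_iff₀ h2n0]
        have s1 : (γ*n/2)*(γ*n/2) ≤ (M:ℝ)*(M:ℝ) := mul_le_mul hM_ge' hM_ge' (by positivity) hM0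
        have s2 : (M:ℝ)*(M:ℝ) ≤ (M:ℝ)*((M:ℝ)+1) := by linarith only [hM0]
        have s3 : 0 ≤ γ^2*(n:ℝ) := by positivity
        linarith only [s1, s2, s3, hM0]
      have hp_up : p ≤ γ := by
        rw [hpdef, div_le_iff₀ h2n0]
        have s1 : (M:ℝ)*((M:ℝ)+1) ≤ (γ*n)*(n:ℝ) :=
          mul_le_mul hM_le hM1_le (by positivity) hγn0
        have s2 : γ*(n:ℝ)*2 ≤ γ*(n:ℝ)*(n:ℝ) :=
          mul_le_mul_of_nonneg_left (show (2:ℝ) ≤ (n:ℝ) by linarith only [hn3']) hγn0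
        linarith only [s1, s2]
      -- conclude
      simp only [Set.mem_setOf_eq]
      rw [hNfm n ω]
      have hsum_eq : ∑ i ∈ Finset.Icc 2 n, 1 / (1 - a i ω) = Ssum := by
        rw [hSdef]
        exact Finset.sum_congr rfl (fun i _ => one_div _)
      rw [hsum_eq, ← hMdef]
      have hD0 : (0:ℝ) < γ ^ 2 * n * Real.log n :=
        mul_pos (mul_pos (pow_pos hγ0 2) hn0) hlogpos
      constructor
      · rw [lt_div_iff₀ hD0]
        calc c/64 * (γ ^ 2 * n * Real.log n) = γ^2/8 * (c/8 * ((n:ℝ) * Real.log n)) := by ring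
          _ < γ^2/8 * Ssum :=
              mul_lt_mul_of_pos_left hS_lo (div_pos (pow_pos hγ0 2) (by norm_num))
          _ ≤ p * Ssum := mul_le_mul_of_nonneg_right hp_lo hS0.le
          _ = (M:ℝ) * ((M:ℝ) + 1) / (2 * n * ((n:ℝ) - 1)) * Ssum := by rw [hpdef]
      · rw [div_lt_iff₀ hD0]
        calc (M:ℝ) * ((M:ℝ) + 1) / (2 * n * ((n:ℝ) - 1)) * Ssum = p * Ssum := by rw [hpdef]
          _ ≤ γ * Ssum := mul_le_mul_of_nonneg_right hp_up hS0.le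
          _ < γ * ((1+4*c) * ((n:ℝ) * Real.log n)) := mul_lt_mul_of_pos_left hS_up hγ0
          _ = (1+4*c)/γ * (γ ^ 2 * n * Real.log n) := by
              rw [div_mul_eq_mul_div, eq_div_iff (ne_of_gt hγ0)]
              ring
          _ < ((1+4*c)/γ + 1) * (γ ^ 2 * n * Real.log n) := by
              apply mul_lt_mul_of_pos_right _ hD0
              linarith
    -- put the measure bounds together
    calc ENNReal.ofReal (1 - K / Real.log n)
        = 1 - ENNReal.ofReal (K / Real.log n) := by
          rw [ENNReal.ofReal_sub _ (by positivity), ENNReal.ofReal_one]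
      _ ≤ 1 - P Bad := tsub_le_tsub_left hPBad 1
      _ = P Badᶜ := (prob_compl_eq_one_sub hBadmeas).symm
      _ ≤ P _ := measure_mono hGood
  -- conclude by squeezing
  have hlim : Tendsto (fun n : ℕ => ENNReal.ofReal (1 - K / Real.log n)) atTop (𝓝 1) := by
    have h0 : Tendsto (fun n : ℕ => K / Real.log n) atTop (nhds 0) :=
      Tendsto.div_atTop tendsto_const_nhds
        (Real.tendsto_log_atTop.comp tendsto_natCast_atTop_atTop)
    have h1 : Tendsto (fun n : ℕ => 1 - K / Real.log n) atTop (nhds 1) := by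
      have h2 : Tendsto (fun n : ℕ => (1:ℝ) - K / Real.log n) atTop (nhds (1 - 0)) :=
        Tendsto.sub tendsto_const_nhds h0
      simpa using h2
    have h2 := ENNReal.tendsto_ofReal h1
    simpa using h2
  exact tendsto_of_tendsto_of_tendsto_of_le_of_le' hlim tendsto_const_nhds main
    (Eventually.of_forall (fun n => prob_le_one))
end

section
/- Fix Δ ∈ (0,1) and suppose the common density g of the overlaps satisfies g(1−x) = c·x^β + O(x^{β+δ}) as x → 0⁺ for some constants c, δ, β > 0. Then there exist positive constants c₁′, c₂′ (independent of n) such that lim_{n→∞} P( c₁′ < N_Δ^{fm} / ((1−Δ)²·n) < c₂′ ) = 1. -/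
open MeasureTheory ProbabilityTheory Filter
open Set ENNReal Topology


lemma aux_integrable {Ω : Type*} [MeasurableSpace Ω] (P : Measure Ω) [IsProbabilityMeasure P]
    (Y : Ω → ℝ) (hYmeas : Measurable Y) (hYval : ∀ ω, Y ω ∈ Set.Ico (0:ℝ) 1)
    (g : ℝ → ℝ)
    (hpdf : Measure.map Y P = volume.withDensity (fun t => ENNReal.ofReal (g t)))
    (c δ β : ℝ) (hc : 0 < c) (hδ : 0 < δ) (hβ : 0 < β)
    (hg : (fun t => g (1 - t) - c * t ^ β) =O[nhdsWithin 0 (Set.Ioi 0)] (fun t => t ^ (β + δ))) :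
    Integrable (fun ω => (1 - Y ω)⁻¹) P := by
  obtain ⟨C, hC⟩ := hg.bound
  rw [eventually_nhdsWithin_iff] at hC
  obtain ⟨t₁, ht₁pos, ht₁⟩ := Metric.eventually_nhds_iff.mp hC
  set t₀ : ℝ := min t₁ 1 with ht₀def
  have ht₀pos : 0 < t₀ := lt_min ht₁pos one_pos
  have ht₀le1 : t₀ ≤ 1 := min_le_right _ _
  set K : ℝ := c + max C 0 with hKdef
  have hKpos : 0 < K := by positivity
  have hgbound : ∀ t ∈ Set.Ioo (0:ℝ) t₀, g (1 - t) ≤ K * t ^ β := by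
    intro t ht
    have h1 : dist t 0 < t₁ := by
      rw [Real.dist_eq, sub_zero, abs_of_pos ht.1]
      exact lt_of_lt_of_le ht.2 (min_le_left _ _)
    have h2 := ht₁ h1 ht.1
    have htpos : 0 < t := ht.1
    have ht1 : t ≤ 1 := le_of_lt (lt_of_lt_of_le ht.2 ht₀le1)
    have h3 : t ^ (β + δ) ≤ t ^ β :=
      Real.rpow_le_rpow_of_exponent_ge htpos ht1 (by linarith)
    have h4 : ‖t ^ (β+δ)‖ = t ^ (β+δ) := Real.norm_of_nonneg (Real.rpow_nonneg htpos.le _)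
    have h5 : g (1-t) - c * t^β ≤ max C 0 * t ^ β := by
      calc g (1-t) - c * t^β ≤ ‖g (1-t) - c * t^β‖ := Real.le_norm_self _
        _ ≤ C * ‖t^(β+δ)‖ := h2
        _ ≤ max C 0 * t^(β+δ) := by
            rw [h4]
            exact mul_le_mul_of_nonneg_right (le_max_left _ _) (Real.rpow_nonneg htpos.le _)
        _ ≤ max C 0 * t^β := mul_le_mul_of_nonneg_left h3 (le_max_right _ _)
    have : K * t ^ β = c * t ^ β + max C 0 * t ^ β := by rw [hKdef]; ring
    linarith
  haveI hν_prob : IsProbabilityMeasure (Measure.map Y P) :=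
    Measure.isProbabilityMeasure_map hYmeas.aemeasurable
  have hν_ac : Measure.map Y P ≪ volume := by
    rw [hpdf]; exact withDensity_absolutelyContinuous _ _
  set h : ℝ → ℝ≥0∞ := (Measure.map Y P).rnDeriv volume with hhdef
  have hh_meas : Measurable h := Measure.measurable_rnDeriv _ _
  have hν_wd : volume.withDensity h = Measure.map Y P :=
    Measure.withDensity_rnDeriv_eq _ _ hν_ac
  set A : Set ℝ := Set.Ioo (1 - t₀) 1 with hAdef
  have hA : MeasurableSet A := measurableSet_Ioo
  have hφm : Measurable fun x : ℝ => ENNReal.ofReal ((1 - x)⁻¹) :=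
    ((measurable_const.sub measurable_id).inv).ennreal_ofReal
  have hGm : Measurable fun x : ℝ => ENNReal.ofReal (K * (1 - x) ^ β) :=
    ((measurable_const.mul ((measurable_const.sub measurable_id).pow measurable_const))).ennreal_ofReal
  -- pointwise bound within A
  have hmemA : ∀ x ∈ A, ENNReal.ofReal (g x) ≤ ENNReal.ofReal (K * (1 - x) ^ β) := by
    intro x hx
    have hu : 1 - x ∈ Set.Ioo (0:ℝ) t₀ := ⟨by linarith [hx.2], by linarith [hx.1]⟩
    have h0 := hgbound (1 - x) hu
    rw [show (1:ℝ) - (1 - x) = x by ring] at h0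
    exact ENNReal.ofReal_le_ofReal h0
  -- a.e. bound on the RN derivative over A
  have hae : h ≤ᵐ[volume.restrict A] fun x => ENNReal.ofReal (K * (1 - x) ^ β) := by
    apply ae_le_of_forall_setLIntegral_le_of_sigmaFinite hh_meas
    intro s hs _
    rw [Measure.restrict_restrict hs]
    have e1 : ∫⁻ x in s ∩ A, h x ∂volume = Measure.map Y P (s ∩ A) := by
      rw [← hν_wd, withDensity_apply _ (hs.inter hA)]
    rw [e1, hpdf, withDensity_apply _ (hs.inter hA)]
    exact setLIntegral_mono hGm fun x hx => hmemA x hx.2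
  have hint_lint : ∫⁻ ω, ENNReal.ofReal ((1 - Y ω)⁻¹) ∂P < ∞ := by
    have e0 : ∫⁻ ω, ENNReal.ofReal ((1 - Y ω)⁻¹) ∂P
        = ∫⁻ x, ENNReal.ofReal ((1 - x)⁻¹) ∂(Measure.map Y P) := by
      rw [lintegral_map hφm hYmeas]
    rw [e0, ← hν_wd, lintegral_withDensity_eq_lintegral_mul _ hh_meas hφm,
      ← lintegral_add_compl _ hA]
    have boundA : ∫⁻ x in A, (h * fun x => ENNReal.ofReal ((1 - x)⁻¹)) x ∂volume < ∞ := by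
      have hle : ∀ᵐ x ∂(volume.restrict A),
          (h * fun x => ENNReal.ofReal ((1 - x)⁻¹)) x
            ≤ ENNReal.ofReal (K * (1 - x) ^ (β - 1)) := by
        filter_upwards [hae, ae_restrict_mem hA] with x hx hxA
        have hu : (0:ℝ) < 1 - x := by linarith [hxA.2]
        calc (h * fun x => ENNReal.ofReal ((1 - x)⁻¹)) x
            = h x * ENNReal.ofReal ((1 - x)⁻¹) := rfl
          _ ≤ ENNReal.ofReal (K * (1 - x) ^ β) * ENNReal.ofReal ((1 - x)⁻¹) :=
              mul_le_mul_left hx _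
          _ = ENNReal.ofReal ((K * (1 - x) ^ β) * (1 - x)⁻¹) :=
              (ENNReal.ofReal_mul (by positivity)).symm
          _ = ENNReal.ofReal (K * (1 - x) ^ (β - 1)) := by
              congr 1
              rw [Real.rpow_sub hu, Real.rpow_one]
              field_simp
      calc ∫⁻ x in A, (h * fun x => ENNReal.ofReal ((1 - x)⁻¹)) x ∂volume
          ≤ ∫⁻ x in A, ENNReal.ofReal (K * (1 - x) ^ (β - 1)) ∂volume :=
            lintegral_mono_ae hle
        _ ≤ ∫⁻ x in A, (‖K * (1 - x) ^ (β - 1)‖₊ : ℝ≥0∞) ∂volume :=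
            lintegral_mono fun x => Real.ofReal_le_enorm _
        _ < ∞ := by
            have h1 : IntervalIntegrable (fun x : ℝ => x ^ (β-1)) volume 0 t₀ :=
              intervalIntegral.intervalIntegrable_rpow' (by linarith)
            have h2 := h1.comp_sub_left 1
            rw [intervalIntegrable_iff] at h2
            have hsub : A ⊆ Set.uIoc (1 - 0) (1 - t₀) := by
              rw [Set.uIoc_of_ge (by linarith)]
              intro x hx
              exact ⟨hx.1, by linarith [hx.2]⟩
            have h3 : IntegrableOn (fun x : ℝ => K * (1 - x) ^ (β-1)) A volume :=
              ((h2.mono_set hsub).const_mul K)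
            exact h3.2
    have boundAc : ∫⁻ x in Aᶜ, (h * fun x => ENNReal.ofReal ((1 - x)⁻¹)) x ∂volume < ∞ := by
      have hle : ∀ x ∈ Aᶜ, (h * fun x => ENNReal.ofReal ((1 - x)⁻¹)) x
          ≤ h x * ENNReal.ofReal (t₀⁻¹) := by
        intro x hx
        refine mul_le_mul_right (ENNReal.ofReal_le_ofReal ?_) _
        rcases le_or_gt x (1 - t₀) with hx1 | hx1
        · exact inv_anti₀ ht₀pos (by linarith)
        · have hx2 : 1 ≤ x := by
            by_contra hcon
            exact hx ⟨hx1, lt_of_not_ge hcon⟩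
          have : (1 - x)⁻¹ ≤ 0 := inv_nonpos.mpr (by linarith)
          exact this.trans (inv_nonneg.mpr ht₀pos.le)
      calc ∫⁻ x in Aᶜ, (h * fun x => ENNReal.ofReal ((1 - x)⁻¹)) x ∂volume
          ≤ ∫⁻ x in Aᶜ, h x * ENNReal.ofReal (t₀⁻¹) ∂volume :=
            setLIntegral_mono (hh_meas.mul_const _) hle
        _ = (∫⁻ x in Aᶜ, h x ∂volume) * ENNReal.ofReal (t₀⁻¹) :=
            lintegral_mul_const _ hh_meas
        _ = Measure.map Y P Aᶜ * ENNReal.ofReal (t₀⁻¹) := by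
            rw [← hν_wd, withDensity_apply _ hA.compl]
        _ < ∞ := ENNReal.mul_lt_top (measure_lt_top _ _) ENNReal.ofReal_lt_top
    exact ENNReal.add_lt_top.mpr ⟨boundA, boundAc⟩
  refine ⟨(measurable_const.sub hYmeas).inv.aestronglyMeasurable, ?_⟩
  rw [hasFiniteIntegral_iff_norm]
  have : ∀ ω, ENNReal.ofReal ‖(1 - Y ω)⁻¹‖ = ENNReal.ofReal ((1 - Y ω)⁻¹) := by
    intro ω
    rw [Real.norm_of_nonneg (inv_nonneg.mpr (by linarith [(hYval ω).2]))]
  simpa only [this] using hint_lint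


/-- **Convergence time for learning with full memory, case `β > 0`.**
The overlaps `a 2, a 3, …` are i.i.d. with values in `[0,1)` and density `g` satisfying
`g(1-t) = c t^β + O(t^{β+δ})` as `t → 0⁺` with `c, δ, β > 0`.  With
`Nfm n ω = (M(M+1)/(2n(n-1))) ∑_{i=2}^n 1/(1 - aᵢ)`, `M = ⌊(1-Δ)n⌋`, the expected number
of sampling events needed by the learner with full memory to reach probability `1 - Δ`
of finding the correct set, there are constants `0 < c₁' < c₂'` with
`P(c₁' < Nfm/((1-Δ)² n) < c₂') → 1` as `n → ∞`. -/
theorem full_memory_learner_time_beta_pos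
    {Ω : Type*} [MeasurableSpace Ω] (P : Measure Ω) [IsProbabilityMeasure P]
    (a : ℕ → Ω → ℝ) (hmeas : ∀ i, Measurable (a i))
    (hindep : iIndepFun a P)
    (hval : ∀ i ω, a i ω ∈ Set.Ico (0 : ℝ) 1)
    (g : ℝ → ℝ)
    (hpdf : ∀ i, Measure.map (a i) P = volume.withDensity (fun t => ENNReal.ofReal (g t)))
    (c δ β : ℝ) (hc : 0 < c) (hδ : 0 < δ) (hβ : 0 < β)
    (hg : (fun t => g (1 - t) - c * t ^ β) =O[nhdsWithin 0 (Set.Ioi 0)] (fun t => t ^ (β + δ)))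
    (Δ : ℝ) (hΔ : 0 < Δ) (hΔ' : Δ < 1)
    (Nfm : ℕ → Ω → ℝ)
    (hNfm : ∀ n ω, Nfm n ω =
      ((⌊(1 - Δ) * n⌋₊ : ℝ) * ((⌊(1 - Δ) * n⌋₊ : ℝ) + 1) / (2 * n * ((n : ℝ) - 1))) *
        ∑ i ∈ Finset.Icc 2 n, 1 / (1 - a i ω)) :
    ∃ C₁ C₂ : ℝ, 0 < C₁ ∧ 0 < C₂ ∧
      Tendsto (fun n : ℕ =>
          P {ω | C₁ < Nfm n ω / ((1 - Δ) ^ 2 * n) ∧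
                 Nfm n ω / ((1 - Δ) ^ 2 * n) < C₂})
        atTop (nhds 1) := by
  have h1a : ∀ i ω, 0 < 1 - a i ω := fun i ω => by have := (hval i ω).2; linarith
  have hΔ1 : (0:ℝ) < 1 - Δ := by linarith
  set X : ℕ → Ω → ℝ := fun i ω => (1 - a (i + 2) ω)⁻¹ with hXdef
  have hXmeas : ∀ i, Measurable (X i) := fun i => (measurable_const.sub (hmeas (i+2))).inv
  have hX1 : ∀ i ω, 1 ≤ X i ω := by
    intro i ω
    refine (one_le_inv₀ (h1a _ _)).mpr ?_
    have := (hval (i+2) ω).1; linarith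
  have hinv_meas : Measurable fun x : ℝ => (1 - x)⁻¹ :=
    (measurable_const.sub measurable_id).inv
  have hint : Integrable (X 0) P :=
    aux_integrable P (a 2) (hmeas 2) (fun ω => hval 2 ω) g (hpdf 2) c δ β hc hδ hβ hg
  have hident : ∀ i, IdentDistrib (X i) (X 0) P P := by
    intro i
    exact IdentDistrib.comp (u := fun x : ℝ => (1 - x)⁻¹)
      (⟨(hmeas (i+2)).aemeasurable, (hmeas 2).aemeasurable, by rw [hpdf, hpdf]⟩ :
        IdentDistrib (a (i+2)) (a 2) P P) hinv_meas
  have hindepX : Pairwise (Function.onFun (IndepFun · · P) X) := by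
    intro i j hij
    exact (hindep.indepFun (show i+2 ≠ j+2 by omega)).comp
      (φ := fun x : ℝ => (1 - x)⁻¹) (ψ := fun x : ℝ => (1 - x)⁻¹) hinv_meas hinv_meas
  have hLLN := strong_law_ae_real X hint hindepX hident
  set m : ℝ := ∫ ω, X 0 ω ∂P with hmdef
  have hm : 1 ≤ m := by
    have h0 : (1:ℝ) = ∫ _ω, (1:ℝ) ∂P := by simp
    rw [hmdef, h0]
    exact integral_mono (integrable_const 1) hint (fun ω => hX1 0 ω)
  refine ⟨m/4, m, by linarith, by linarith, ?_⟩
  -- deterministic prefactor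
  have hfl : Tendsto (fun n : ℕ => (⌊(1-Δ)*(n:ℝ)⌋₊:ℝ)/(n:ℝ)) atTop (𝓝 (1-Δ)) :=
    (tendsto_nat_floor_mul_div_atTop hΔ1.le).comp tendsto_natCast_atTop_atTop
  have hfl1 : Tendsto (fun n : ℕ => ((⌊(1-Δ)*(n:ℝ)⌋₊:ℝ)+1)/(n:ℝ)) atTop (𝓝 (1-Δ)) := by
    have h2 := hfl.add tendsto_one_div_atTop_nhds_zero_nat
    rw [add_zero] at h2
    refine h2.congr fun n => ?_
    rw [← add_div]
  have hq : Tendsto (fun n : ℕ =>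
      ((⌊(1-Δ)*(n:ℝ)⌋₊:ℝ)/(n:ℝ)) * (((⌊(1-Δ)*(n:ℝ)⌋₊:ℝ)+1)/(n:ℝ)) * (2*(1-Δ)^2)⁻¹)
      atTop (𝓝 (2⁻¹)) := by
    have h3 := (hfl.mul hfl1).mul_const (2*(1-Δ)^2)⁻¹
    have heq : (1-Δ)*(1-Δ)*(2*(1-Δ)^2)⁻¹ = (2:ℝ)⁻¹ := by
      field_simp
    rwa [heq] at h3
  -- a.e. convergence of the normalized quantity
  have hRlim : ∀ᵐ ω ∂P,
      Tendsto (fun n : ℕ => Nfm n ω / ((1-Δ)^2 * n)) atTop (𝓝 (m/2)) := by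
    filter_upwards [hLLN] with ω hω
    have hu : Tendsto (fun n : ℕ => (∑ i ∈ Finset.range (n-1), X i ω)/((n:ℝ)-1))
        atTop (𝓝 m) := by
      have h4 : Tendsto (fun n : ℕ => (∑ i ∈ Finset.range (n-1), X i ω)/((n-1 : ℕ):ℝ))
          atTop (𝓝 m) := hω.comp (tendsto_sub_atTop_nat 1)
      refine h4.congr' ?_
      filter_upwards [eventually_ge_atTop 1] with n hn
      rw [Nat.cast_sub hn, Nat.cast_one]
    have h5 := (hq.mul hu)
    rw [show (2:ℝ)⁻¹ * m = m/2 by ring] at h5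
    refine h5.congr' ?_
    filter_upwards [eventually_ge_atTop 2] with n hn
    have hn2 : (2:ℝ) ≤ (n:ℝ) := by exact_mod_cast hn
    have hnne : (n:ℝ) ≠ 0 := by linarith
    have hn1ne : (n:ℝ) - 1 ≠ 0 := by linarith
    have hΔne : (1-Δ) ≠ 0 := ne_of_gt hΔ1
    have hsum : ∑ i ∈ Finset.Icc 2 n, 1 / (1 - a i ω)
        = ∑ i ∈ Finset.range (n-1), X i ω := by
      rw [← Finset.Ico_add_one_right_eq_Icc, Finset.sum_Ico_eq_sum_range]
      have : n + 1 - 2 = n - 1 := by omega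
      rw [this]
      refine Finset.sum_congr rfl fun i _ => ?_
      rw [hXdef, one_div, add_comm 2 i]
    rw [hNfm n ω, hsum]
    field_simp
    try ring
    try exact Or.inl trivial
  -- measurability of the events
  have hsets : ∀ n : ℕ, MeasurableSet {ω | m/4 < Nfm n ω / ((1-Δ)^2*(n:ℝ)) ∧
      Nfm n ω / ((1-Δ)^2*(n:ℝ)) < m} := by
    intro n
    have hNn : Measurable (Nfm n) := by
      have hfe : Nfm n = fun ω =>
          ((⌊(1 - Δ) * n⌋₊ : ℝ) * ((⌊(1 - Δ) * n⌋₊ : ℝ) + 1) / (2 * n * ((n : ℝ) - 1))) *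
            ∑ i ∈ Finset.Icc 2 n, 1 / (1 - a i ω) := funext (hNfm n)
      rw [hfe]
      refine Measurable.const_mul ?_ _
      refine Finset.measurable_sum _ fun i _ => ?_
      exact measurable_const.div (measurable_const.sub (hmeas i))
    have hR : Measurable fun ω => Nfm n ω / ((1-Δ)^2*(n:ℝ)) := hNn.div_const _
    exact (measurableSet_lt measurable_const hR).inter (measurableSet_lt hR measurable_const)
  have hfin := tendsto_measure_of_ae_tendsto_indicator_of_isFiniteMeasure
    (μ := P) (A := Set.univ) atTop MeasurableSet.univ hsets ?_
  · simpa using hfin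
  · filter_upwards [hRlim] with ω hω
    have h6 : ∀ᶠ n : ℕ in atTop, Nfm n ω / ((1-Δ)^2*(n:ℝ)) ∈ Set.Ioo (m/4) m :=
      hω (Ioo_mem_nhds (by linarith) (by linarith))
    filter_upwards [h6] with n hn
    simp only [Set.mem_univ, iff_true, Set.mem_setOf_eq]
    exact ⟨hn.1, hn.2⟩
end
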